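/- Let δ = n^{−(1/3+ε)} for a fixed constant ε > 0. There exist constants c and n0 such that for all n ≥ n0, setting N = ⌈c·log n⌉: for every x ∈ {0,1}^n, if z^1,…,z^N are independent traces drawn from Del_δ(x) and w = BMA(n, z^1,…,z^N), then (1) if x has no desert, Pr[w = x] ≥ 1 − 1/n²; and (2) if x has at least one desert, letting r be the first location of x that is deep in a desert, Pr[w_{[0:r+m]} = x_{[0:r+m]}] ≥ 1 − 1/n². -/

import Mathlib

open scoped Classical

namespace TraceRec

/-- The subword `x_{[a:b]} = (x_a, …, x_b)` of a string. -/
def subword (x : List Bool) (a b : ℕ) : List Bool := (x.drop a).take (b + 1 - a)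

/-- The trace of `x` obtained by deleting the coordinates in the deletion set `D`. -/
def trace (x : List Bool) (D : Finset ℕ) : List Bool :=
  ((List.range x.length).filter (fun i => decide (i ∉ D))).map (fun i => x.getD i false)

/-- Probability weight of the deletion set `D` for an `n`-bit string at deletion rate `δ`:
each of the `n` coordinates is deleted independently with probability `δ`. -/
noncomputable def delWeight (δ : ℝ) (n : ℕ) (D : Finset ℕ) : ℝ :=
  δ ^ D.card * (1 - δ) ^ (n - D.card)

/-- Probability, over `N` independent deletion sets for an `n`-bit string, of event `P`. -/
noncomputable def prSets (δ : ℝ) (n N : ℕ) (P : (Fin N → Finset ℕ) → Prop) : ℝ :=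
  ∑ Ds ∈ Fintype.piFinset (fun _ : Fin N => (Finset.range n).powerset),
    (∏ i, delWeight δ n (Ds i)) * (if P Ds then 1 else 0)

/-- Probability of event `P` over `N` independent traces of `x` drawn from `Del_δ(x)`. -/
noncomputable def prTraces (δ : ℝ) (x : List Bool) (N : ℕ)
    (P : (Fin N → List Bool) → Prop) : ℝ :=
  prSets δ x.length N (fun Ds => P (fun i => trace x (Ds i)))

/-- Probability of event `P` over one trace of `x` drawn from `Del_δ(x)`. -/
noncomputable def prOne (δ : ℝ) (x : List Bool) (P : List Bool → Prop) : ℝ :=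
  prTraces δ x 1 (fun ys => P (ys 0))

/-- The set of all binary strings of length `n`. -/
def binStrings (n : ℕ) : Finset (List Bool) :=
  Finset.image (fun f : Fin n → Bool => List.ofFn f) Finset.univ

/-- Majority bit of `N` bits. -/
def majority (N : ℕ) (b : Fin N → Bool) : Bool :=
  decide (N ≤ 2 * (Finset.univ.filter (fun i => b i = true)).card)

/-- Padding of a trace with `0`s (`false`) at the end. -/
def pad (z : List Bool) : ℕ → Bool := fun j => z.getD j false

/-- The pointers `current_i(t)` in the Bitwise Majority Alignment algorithm. -/
def bmaCur (N : ℕ) (u : Fin N → ℕ → Bool) : ℕ → Fin N → ℕ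
  | 0 => fun _ => 0
  | t + 1 => fun i =>
      let c := bmaCur N u t
      if u i (c i) = majority N (fun j => u j (c j)) then c i + 1 else c i

/-- The bit `w_t` output by BMA at round `t`. -/
def bmaBit (N : ℕ) (u : Fin N → ℕ → Bool) (t : ℕ) : Bool :=
  majority N (fun j => u j (bmaCur N u t j))

/-- The Bitwise Majority Alignment algorithm on `N` traces, run for `n'` rounds. -/
def BMA (n' N : ℕ) (z : Fin N → List Bool) : List Bool :=
  (List.range n').map (fun t => bmaBit N (fun i => pad (z i)) t)

/-- `fmap D j`: the original position of the `j`-th surviving bit under deletion set `D`,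
i.e. the unique `k ∉ D` with `k - |D ∩ [0:k-1]| = j`. -/
noncomputable def fmap (D : Finset ℕ) (j : ℕ) : ℕ := Nat.nth (fun k => k ∉ D) j

/-- `position_i(t) = f_i(current_i(t))` in the run of BMA. -/
noncomputable def positionOf {R : ℕ} (z : Fin R → List Bool) (D : Fin R → Finset ℕ)
    (t : ℕ) (i : Fin R) : ℕ :=
  fmap (D i) (bmaCur R (fun i => pad (z i)) t i)

/-- `distance_i(t) = position_i(t) - t` in the run of BMA. -/
noncomputable def distOf {R : ℕ} (z : Fin R → List Bool) (D : Fin R → Finset ℕ)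
    (t : ℕ) (i : Fin R) : ℤ :=
  (positionOf z D t i : ℤ) - t

/-- `z` is a prefix of the infinite periodic string `s^∞`. -/
def periodicPrefix (s z : List Bool) : Prop :=
  ∀ j < z.length, z.getD j false = s.getD (j % s.length) false

/-- `z` is an `s`-desert for some nonempty `s` of length at most `C`
(with desert length threshold `M`). -/
def isDesert (C M : ℕ) (z : List Bool) : Prop :=
  ∃ s : List Bool, s ≠ [] ∧ s.length ≤ C ∧ M ≤ z.length ∧ periodicPrefix s z

/-- Location `i` of `x` is deep in a desert: `x_{[i-m:i+m]}` is a desert. -/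
def deepInDesert (C m : ℕ) (x : List Bool) (i : ℕ) : Prop :=
  m ≤ i ∧ isDesert C (2 * m + 1) (subword x (i - m) (i + m))

/-- `x` has a desert: some subword of `x` is a desert. -/
def hasDesert (C M : ℕ) (x : List Bool) : Prop :=
  ∃ a b, isDesert C M (subword x a b)

/-- `r` is the first location of `x` that is deep in a desert. -/
def firstDeep (C m : ℕ) (x : List Bool) (r : ℕ) : Prop :=
  deepInDesert C m x r ∧ ∀ i < r, ¬ deepInDesert C m x i

/-- The deletion rate `δ = n^{-(1/3+ε)}`. -/
noncomputable def delta (ε : ℝ) (n : ℕ) : ℝ := (n : ℝ) ^ (-(1/3 + ε))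

/-- `C = ⌈100/ε⌉`. -/
noncomputable def Cp (ε : ℝ) : ℕ := ⌈(100 : ℝ) / ε⌉₊

/-- `m = ⌈n^{1/3}⌉`. -/
noncomputable def mp (n : ℕ) : ℕ := ⌈(n : ℝ) ^ ((1 : ℝ) / 3)⌉₊

/-- `M = 2m + 1`. -/
noncomputable def Mp (n : ℕ) : ℕ := 2 * mp n + 1

/-- `σ = ⌈√(δn)·log n⌉`. -/
noncomputable def sigp (ε : ℝ) (n : ℕ) : ℕ :=
  ⌈Real.sqrt (delta ε n * n) * Real.log n⌉₊

/-- A family of deletion sets (for traces of an `n'`-bit string) is good. -/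
def goodFam (C M n' : ℕ) {R : ℕ} (D : Fin R → Finset ℕ) : Prop :=
  (∀ i : Fin R, ∀ a, a + 2 * C ^ 2 * M ≤ n' →
      (D i ∩ Finset.Ico a (a + 2 * C ^ 2 * M)).card ≤ C) ∧
  (∀ a, a + (M + C + 1) ≤ n' →
      ((Finset.univ.filter
          (fun i : Fin R => (D i ∩ Finset.Ico a (a + (M + C + 1))).Nonempty)).card : ℝ)
        ≤ (R : ℝ) / (C : ℝ) ^ 3)

/-- Two tuples of strings are `η`-close as multisets: one is obtained from the other by
substituting at most `ηN` of its strings. -/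
def closeTuples (η : ℝ) {N : ℕ} (z z' : Fin N → List Bool) : Prop :=
  ∃ π : Equiv.Perm (Fin N),
    ((Finset.univ.filter (fun i => z i ≠ z' (π i))).card : ℝ) ≤ η * N

/-- `s` is a minimal-length pattern for the desert `x_{[r-m:r+m]}` around location `r`. -/
def minimalPattern (C m : ℕ) (x : List Bool) (r : ℕ) (s : List Bool) : Prop :=
  s ≠ [] ∧ s.length ≤ C ∧ periodicPrefix s (subword x (r - m) (r + m)) ∧
    ∀ s' : List Bool, s' ≠ [] → periodicPrefix s' (subword x (r - m) (r + m)) →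
      s.length ≤ s'.length

/-- `e` is the end position of the desert containing `x_r` (for pattern length `k`):
the smallest integer `≥ r + m` such that `x_{e+1} ≠ x_{e+1-k}`. -/
def isEnd (x : List Bool) (r m k e : ℕ) : Prop :=
  r + m ≤ e ∧ x.getD (e + 1) false ≠ x.getD (e + 1 - k) false ∧
    ∀ j, r + m ≤ j → j < e → x.getD (j + 1) false = x.getD (j + 1 - k) false

/-- The tail string `tail = x_{[end-k+2 : end-k+8σ+1]}` of the desert. -/
def tailStr (x : List Bool) (k e σ : ℕ) : List Bool :=
  subword x (e - k + 2) (e - k + 8 * σ + 1)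

/-- `last(y)` for the trace of `x` with deletion set `D`: the position in the trace of the
last surviving bit of `x_{[0:e]}`, or `-1` if all of `x_{[0:e]}` is deleted. -/
def lastPos (D : Finset ℕ) (e : ℕ) : ℤ :=
  (((Finset.range (e + 1)).filter (fun i => decide (i ∉ D))).card : ℤ) - 1

/-- `w ∈ Cyc_s`: `w` is a cyclic shift of `s`. -/
def inCyc (s w : List Bool) : Prop := ∃ j, w = s.rotate j

/-- `sig` is the signature of the desert of `x` with pattern `s` ending at `e`. -/
def isSig (x s : List Bool) (e σ : ℕ) (sig : List Bool) : Prop :=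
  (∃ d, e + s.length + 1 ≤ d ∧ d ≤ e + 8 * σ - s.length + 1 ∧
      ¬ inCyc s (subword x (d + 1 - s.length) d) ∧
      (∀ d', e + s.length + 1 ≤ d' → d' < d → inCyc s (subword x (d' + 1 - s.length) d')) ∧
      sig = subword x (e - s.length + 2) d) ∨
  ((∀ d, e + s.length + 1 ≤ d → d ≤ e + 8 * σ - s.length + 1 →
      inCyc s (subword x (d + 1 - s.length) d)) ∧
    sig = tailStr x s.length e σ)

/-- A string `z` is in the right form `w ∘ sig`, where the leftmost `k`-bit subword of `z`
not in `Cyc_s` consists of the first `k` bits of the trailing occurrence of `sig`. -/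
def rightForm (s sig z : List Bool) : Prop :=
  ∃ w : List Bool, z = w ++ sig ∧
    ∀ a < w.length, inCyc s ((z.drop a).take s.length)



open Finset

section Aux

-- infinite predicate
lemma inf_notmem (D : Finset ℕ) : {k : ℕ | k ∉ D}.Infinite := by
  have : {k : ℕ | k ∉ D} = (↑D : Set ℕ)ᶜ := rfl
  rw [this]
  exact (D.finite_toSet).infinite_compl

lemma fmap_strictMono (D : Finset ℕ) : StrictMono (fmap D) :=
  Nat.nth_strictMono (inf_notmem D)

lemma fmap_notmem (D : Finset ℕ) (j : ℕ) : fmap D j ∉ D :=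
  Nat.nth_mem_of_infinite (inf_notmem D) j

lemma count_fmap (D : Finset ℕ) (j : ℕ) : Nat.count (fun k => k ∉ D) (fmap D j) = j :=
  Nat.count_nth_of_infinite (inf_notmem D) j

lemma le_fmap (D : Finset ℕ) (j : ℕ) : j ≤ fmap D j :=
  (fmap_strictMono D).le_apply

-- count identity
lemma count_add_card (D : Finset ℕ) (k : ℕ) :
    Nat.count (fun k => k ∉ D) k + (D ∩ Finset.range k).card = k := by
  rw [Nat.count_eq_card_filter_range]
  have h2 : D ∩ Finset.range k = (Finset.range k).filter (fun x => x ∈ D) := by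
    rw [Finset.filter_mem_eq_inter, Finset.inter_comm]
  rw [h2]
  have h3 := Finset.card_filter_add_card_filter_not (s := Finset.range k)
      (p := fun x => x ∉ D)
  simp only [not_not] at h3
  rw [h3, Finset.card_range]



variable {D : Finset ℕ}

lemma fmap_eq_add (D : Finset ℕ) (j : ℕ) :
    fmap D j = j + (D ∩ Finset.range (fmap D j)).card := by
  have h := count_add_card D (fmap D j)
  rw [count_fmap] at h
  omega

lemma card_split (D : Finset ℕ) {a b : ℕ} (hab : a ≤ b) :
    (D ∩ Finset.range b).card = (D ∩ Finset.range a).card + (D ∩ Finset.Ico a b).card := by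
  have h1 : Finset.range b = Finset.range a ∪ Finset.Ico a b := by
    rw [Finset.range_eq_Ico, Finset.range_eq_Ico]
    exact (Finset.Ico_union_Ico_eq_Ico (Nat.zero_le a) hab).symm
  rw [h1, Finset.inter_union_distrib_left]
  apply Finset.card_union_of_disjoint
  apply Finset.disjoint_left.2
  intro q hq hq2
  simp only [Finset.mem_inter, Finset.mem_range, Finset.mem_Ico] at hq hq2
  omega

lemma fmap_diff (D : Finset ℕ) {c c' : ℕ} (h : c ≤ c') :
    fmap D c' = fmap D c + (c' - c) + (D ∩ Finset.Ico (fmap D c) (fmap D c')).card := by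
  have h1 := fmap_eq_add D c
  have h2 := fmap_eq_add D c'
  have h3 := card_split D ((fmap_strictMono D).monotone h)
  omega

lemma mem_of_lt_fmap_zero {q : ℕ} (h : q < fmap D 0) : q ∈ D := by
  by_contra hq
  have h1 : Nat.nth (fun k => k ∉ D) (Nat.count (fun k => k ∉ D) q) = q := Nat.nth_count hq
  have h2 : fmap D 0 ≤ q := by
    calc fmap D 0 ≤ Nat.nth (fun k => k ∉ D) (Nat.count (fun k => k ∉ D) q) :=
          ((fmap_strictMono D).monotone (Nat.zero_le _))
    _ = q := h1
  omega

lemma count_succ_mem (q : ℕ) (h : q ∉ D) :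
    Nat.count (fun k => k ∉ D) (q + 1) = Nat.count (fun k => k ∉ D) q + 1 := by
  rw [Nat.count_succ]
  simp [h]

lemma fmap_succ_le {c q : ℕ} (hq : q ∉ D) (h : fmap D c < q) : fmap D (c + 1) ≤ q := by
  have h1 : Nat.count (fun k => k ∉ D) (fmap D c + 1) = c + 1 := by
    rw [count_succ_mem _ (fmap_notmem D c), count_fmap]
  have h2 : c + 1 ≤ Nat.count (fun k => k ∉ D) q := by
    rw [← h1]; exact Nat.count_monotone _ h
  calc fmap D (c+1) ≤ Nat.nth (fun k => k ∉ D) (Nat.count (fun k => k ∉ D) q) :=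
        (fmap_strictMono D).monotone h2
  _ = q := Nat.nth_count hq

lemma fmap_succ_eq {c : ℕ} (h : fmap D c + 1 ∉ D) : fmap D (c + 1) = fmap D c + 1 := by
  have h1 := fmap_succ_le h (Nat.lt_succ_self _)
  have h2 := fmap_strictMono D (show c < c + 1 by omega)
  omega

lemma fmap_zero_of_notmem (h : (0:ℕ) ∉ D) : fmap D 0 = 0 := by
  have := Nat.nth_count (p := fun k => k ∉ D) h
  rwa [Nat.count_zero] at this

lemma fmap_zero_le {q : ℕ} (hq : q ∉ D) : fmap D 0 ≤ q := by
  calc fmap D 0 ≤ Nat.nth (fun k => k ∉ D) (Nat.count (fun k => k ∉ D) q) :=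
        (fmap_strictMono D).monotone (Nat.zero_le _)
  _ = q := Nat.nth_count hq

lemma le_fmap_of_count_le {n j : ℕ} (h : Nat.count (fun k => k ∉ D) n ≤ j) :
    n ≤ fmap D j := by
  by_contra hlt
  push_neg at hlt
  have h1 : Nat.count (fun k => k ∉ D) (fmap D j + 1) = j + 1 := by
    rw [count_succ_mem _ (fmap_notmem D j), count_fmap]
  have h2 : Nat.count (fun k => k ∉ D) (fmap D j + 1) ≤ Nat.count (fun k => k ∉ D) n :=
    Nat.count_monotone _ hlt
  omega

lemma len_filter_count (D : Finset ℕ) (n : ℕ) :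
    ((List.range n).filter (fun i => decide (i ∉ D))).length
      = Nat.count (fun k => k ∉ D) n := by
  induction n with
  | zero => simp [Nat.count_zero]
  | succ n ih =>
      rw [List.range_succ, List.filter_append, List.length_append, ih, Nat.count_succ]
      by_cases h : n ∈ D <;> simp [h]

lemma filter_range_getElem? (D : Finset ℕ) (n j : ℕ)
    (h : j < ((List.range n).filter (fun i => decide (i ∉ D))).length) :
    ((List.range n).filter (fun i => decide (i ∉ D)))[j]? = some (fmap D j) := by
  induction n with
  | zero => simp at h
  | succ n ih =>
      by_cases hj : j < ((List.range n).filter (fun i => decide (i ∉ D))).length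
      · rw [List.range_succ, List.filter_append, List.getElem?_append, if_pos hj]
        exact ih hj
      · have hn : n ∉ D := by
          by_contra hn
          have hfn : (List.range (n+1)).filter (fun i => decide (i ∉ D))
              = ((List.range n).filter (fun i => decide (i ∉ D))) := by
            rw [List.range_succ, List.filter_append]
            simp [hn]
          rw [hfn] at h
          exact hj h
        have hfn : (List.range (n+1)).filter (fun i => decide (i ∉ D))
            = ((List.range n).filter (fun i => decide (i ∉ D))) ++ [n] := by
          rw [List.range_succ, List.filter_append]
          simp [hn]
        rw [hfn] at h ⊢
        rw [List.length_append] at h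
        simp only [List.length_singleton] at h
        have hj' : j = ((List.range n).filter (fun i => decide (i ∉ D))).length := by omega
        rw [List.getElem?_append_right (by omega), hj']
        simp only [Nat.sub_self]
        have : fmap D (((List.range n).filter (fun i => decide (i ∉ D))).length) = n := by
          rw [len_filter_count]
          exact Nat.nth_count hn
        rw [this]
        rfl

lemma pad_trace (x : List Bool) (D : Finset ℕ) (j : ℕ) :
    pad (trace x D) j = x.getD (fmap D j) false := by
  unfold pad trace
  by_cases h : j < ((List.range x.length).filter (fun i => decide (i ∉ D))).length
  · rw [List.getD_eq_getElem?_getD, List.getElem?_map, filter_range_getElem? _ _ _ h]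
    simp
  · push_neg at h
    rw [List.getD_eq_default _ _ (by simpa using h)]
    rw [List.getD_eq_default]
    rw [len_filter_count] at h
    exact le_fmap_of_count_le h


end Aux

section Det

variable (x : List Bool) {N : ℕ} (D : Fin N → Finset ℕ)

/-- The padded string. -/
def Xb : ℕ → Bool := fun t => x.getD t false

/-- Pointer of trace `i` at time `t`. -/
noncomputable def curD (t : ℕ) (i : Fin N) : ℕ :=
  bmaCur N (fun i => pad (trace x (D i))) t i

/-- Output bit at time `t`. -/
noncomputable def wD (t : ℕ) : Bool := bmaBit N (fun i => pad (trace x (D i))) t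

/-- Position (in `x`) of the pointer of trace `i` at time `t`. -/
noncomputable def posD (t : ℕ) (i : Fin N) : ℕ := fmap (D i) (curD x D t i)

lemma display_eq (t : ℕ) (i : Fin N) :
    pad (trace x (D i)) (curD x D t i) = Xb x (posD x D t i) := pad_trace _ _ _

lemma curD_zero (i : Fin N) : curD x D 0 i = 0 := rfl

lemma curD_succ (t : ℕ) (i : Fin N) :
    curD x D (t+1) i =
      if Xb x (posD x D t i) = wD x D t then curD x D t i + 1 else curD x D t i := by
  rw [← display_eq]
  rfl

lemma curD_succ_adv (t : ℕ) (i : Fin N) (h : Xb x (posD x D t i) = wD x D t) :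
    curD x D (t+1) i = curD x D t i + 1 := by rw [curD_succ, if_pos h]

lemma curD_succ_stall (t : ℕ) (i : Fin N) (h : ¬ (Xb x (posD x D t i) = wD x D t)) :
    curD x D (t+1) i = curD x D t i := by rw [curD_succ, if_neg h]

lemma curD_succ_le (t : ℕ) (i : Fin N) :
    curD x D t i ≤ curD x D (t+1) i ∧ curD x D (t+1) i ≤ curD x D t i + 1 := by
  rw [curD_succ]
  split <;> omega

lemma curD_mono (s t : ℕ) (hst : s ≤ t) (i : Fin N) :
    curD x D s i ≤ curD x D t i ∧ curD x D t i - curD x D s i ≤ t - s := by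
  induction t with
  | zero =>
      have : s = 0 := by omega
      subst this
      omega
  | succ t ih =>
      rcases Nat.lt_or_ge s (t+1) with h | h
      · have h2 := ih (by omega)
        have h3 := curD_succ_le x D t i
        omega
      · have : s = t + 1 := by omega
        subst this
        omega

lemma posD_mono (s t : ℕ) (hst : s ≤ t) (i : Fin N) : posD x D s i ≤ posD x D t i :=
  (fmap_strictMono (D i)).monotone (curD_mono x D s t hst i).1

lemma posD_stall (t : ℕ) (i : Fin N) (h : ¬ (Xb x (posD x D t i) = wD x D t)) :
    posD x D (t+1) i = posD x D t i := by
  unfold posD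
  rw [curD_succ_stall x D t i h]

/-- Fundamental position identity between two times. -/
lemma posD_ident (s t : ℕ) (hst : s ≤ t) (i : Fin N) :
    posD x D t i = posD x D s i + (curD x D t i - curD x D s i)
      + ((D i) ∩ Finset.Ico (posD x D s i) (posD x D t i)).card := by
  have h := fmap_diff (D i) (curD_mono x D s t hst i).1
  have h2 := curD_mono x D s t hst i
  unfold posD
  omega

/-- Telescoping the pointer increments. -/
lemma curD_telescope (s t : ℕ) (hst : s ≤ t) (i : Fin N) :
    curD x D t i - curD x D s i
      = ∑ v ∈ Finset.Ico s t, (curD x D (v+1) i - curD x D v i) := by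
  induction t with
  | zero =>
      have : s = 0 := by omega
      subst this; simp
  | succ t ih =>
      rcases Nat.lt_or_ge s (t+1) with h | h
      · rw [Finset.sum_Ico_succ_top (by omega)]
        rw [← ih (by omega)]
        have h2 := curD_mono x D s t (by omega) i
        have h3 := curD_succ_le x D t i
        omega
      · have : s = t + 1 := by omega
        subst this; simp

/-- Telescoping the deletion counts along positions. -/
lemma del_telescope (s t : ℕ) (hst : s ≤ t) (i : Fin N) :
    ((D i) ∩ Finset.Ico (posD x D s i) (posD x D t i)).card
      = ∑ v ∈ Finset.Ico s t,
          ((D i) ∩ Finset.Ico (posD x D v i) (posD x D (v+1) i)).card := by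
  induction t with
  | zero =>
      have : s = 0 := by omega
      subst this; simp
  | succ t ih =>
      rcases Nat.lt_or_ge s (t+1) with h | h
      · rw [Finset.sum_Ico_succ_top (by omega), ← ih (by omega)]
        have h1 : posD x D s i ≤ posD x D t i := posD_mono x D s t (by omega) i
        have h2 : posD x D t i ≤ posD x D (t+1) i := posD_mono x D t (t+1) (by omega) i
        have h3 := card_split (D := (D i) ∩ Finset.Ico (posD x D s i) (posD x D (t+1) i)) h2
        -- simpler: direct split of the Ico
        have h4 : Finset.Ico (posD x D s i) (posD x D (t+1) i)
            = Finset.Ico (posD x D s i) (posD x D t i)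
              ∪ Finset.Ico (posD x D t i) (posD x D (t+1) i) :=
          (Finset.Ico_union_Ico_eq_Ico h1 h2).symm
        rw [h4, Finset.inter_union_distrib_left, Finset.card_union_of_disjoint]
        apply Finset.disjoint_left.2
        intro q hq hq2
        simp only [Finset.mem_inter, Finset.mem_Ico] at hq hq2
        omega
      · have : s = t + 1 := by omega
        subst this; simp

lemma aligned_persist (i : Fin N) {a t : ℕ} (hat : a ≤ t) (ha : posD x D a i = a)
    (hw : ∀ v, a ≤ v → v < t → wD x D v = Xb x v)
    (hD : ∀ q, a < q → q ≤ t → q ∉ D i) :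
    posD x D t i = t := by
  induction t, hat using Nat.le_induction with
  | base => exact ha
  | succ t hat ih =>
      have hpt : posD x D t i = t :=
        ih (fun v hv1 hv2 => hw v hv1 (by omega)) (fun q hq1 hq2 => hD q hq1 (by omega))
      have hadv : Xb x (posD x D t i) = wD x D t := by
        rw [hpt, hw t hat (by omega)]
      have h1 : curD x D (t+1) i = curD x D t i + 1 := curD_succ_adv x D t i hadv
      have h2 : posD x D (t+1) i = fmap (D i) (curD x D t i + 1) := by
        unfold posD; rw [h1]
      rw [h2]
      have h3 : posD x D t i + 1 ∉ D i := by
        rw [hpt]; exact hD (t+1) (by omega) (by omega)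
      have h4 := fmap_succ_eq h3
      unfold posD at h4
      rw [h4]
      unfold posD at hpt
      rw [hpt]

/-- The fundamental bookkeeping identity relative to an anchor. -/
lemma kb_ident (i : Fin N) {a v : ℕ} (anchor : posD x D a i = a ∨ a = 0)
    (hav : a ≤ v) :
    posD x D v i + ((v - a) - (curD x D v i - curD x D a i))
      = v + ((D i) ∩ Finset.Ico a (posD x D v i)).card := by
  have hpm : posD x D a i ≤ posD x D v i := posD_mono x D a v hav i
  have hid := posD_ident x D a v hav i
  have hcm := curD_mono x D a v hav i
  have hbase : posD x D a i
        + ((D i) ∩ Finset.Ico (posD x D a i) (posD x D v i)).card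
      = a + ((D i) ∩ Finset.Ico a (posD x D v i)).card := by
    rcases anchor with h | h
    · rw [h]
    · subst h
      have hsplit : Finset.Ico 0 (posD x D v i)
          = Finset.Ico 0 (posD x D 0 i) ∪ Finset.Ico (posD x D 0 i) (posD x D v i) :=
        (Finset.Ico_union_Ico_eq_Ico (by omega) hpm).symm
      have hdisj : Disjoint ((D i) ∩ Finset.Ico 0 (posD x D 0 i))
          ((D i) ∩ Finset.Ico (posD x D 0 i) (posD x D v i)) := by
        apply Finset.disjoint_left.2
        intro q hq hq2
        simp only [Finset.mem_inter, Finset.mem_Ico] at hq hq2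
        omega
      have hpref : (D i) ∩ Finset.Ico 0 (posD x D 0 i) = Finset.Ico 0 (posD x D 0 i) := by
        apply Finset.inter_eq_right.2
        intro q hq
        simp only [Finset.mem_Ico] at hq
        have : q < fmap (D i) 0 := by
          unfold posD at hq
          have hc0 : curD x D 0 i = 0 := rfl
          rw [hc0] at hq
          omega
        exact mem_of_lt_fmap_zero this
      have hcard0 : ((D i) ∩ Finset.Ico 0 (posD x D 0 i)).card = posD x D 0 i := by
        rw [hpref]
        simp
      rw [hsplit, Finset.inter_union_distrib_left, Finset.card_union_of_disjoint hdisj, hcard0]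
      omega
  omega

/-- Position and local deletion count stay bounded near an anchor. -/
lemma KB {C R L : ℕ} (hL : L = R + 2*C + 3)
    (H1 : ∀ (i : Fin N) a, ((D i) ∩ Finset.Ico a (a + L)).card ≤ C)
    (i : Fin N) {a v : ℕ} (anchor : posD x D a i = a ∨ a = 0)
    (hav : a ≤ v) (hvR : v ≤ a + R + 1) :
    posD x D v i < a + L ∧ ((D i) ∩ Finset.Ico a (posD x D v i)).card ≤ C := by
  induction v, hav using Nat.le_induction with
  | base =>
      have hbd : posD x D a i ≤ a + C := by
        rcases anchor with h | h
        · omega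
        · subst h
          have hq : ∃ q, q ≤ C ∧ q ∉ D i := by
            by_contra hq
            push_neg at hq
            have hsub : Finset.Ico 0 (C+1) ⊆ (D i) ∩ Finset.Ico 0 (0 + L) := by
              intro q hmem
              simp only [Finset.mem_Ico] at hmem
              simp only [Finset.mem_inter, Finset.mem_Ico]
              exact ⟨hq q (by omega), by omega, by omega⟩
            have := Finset.card_le_card hsub
            simp only [Nat.card_Ico] at this
            have h1 := H1 i 0
            omega
          obtain ⟨q, hq1, hq2⟩ := hq
          have : fmap (D i) 0 ≤ q := fmap_zero_le hq2
          have hc0 : curD x D 0 i = 0 := rfl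
          unfold posD
          rw [hc0]
          omega
      constructor
      · omega
      · -- card (D ∩ Ico a (pos a)) ≤ C
        rcases anchor with h | h
        · rw [h]
          simp
        · subst h
          have hsub : (D i) ∩ Finset.Ico 0 (posD x D 0 i) ⊆ (D i) ∩ Finset.Ico 0 (0 + L) := by
            apply Finset.inter_subset_inter (le_refl _)
            apply Finset.Ico_subset_Ico (le_refl _)
            omega
          have := Finset.card_le_card hsub
          have h1 := H1 i 0
          omega
  | succ v hav ih =>
      obtain ⟨ih1, ih2⟩ := ih (by omega)
      -- next position jump is at most C+1
      have hnext : posD x D (v+1) i ≤ posD x D v i + C + 1 := by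
        have hq : ∃ q, posD x D v i < q ∧ q ≤ posD x D v i + C + 1 ∧ q ∉ D i := by
          by_contra hq
          push_neg at hq
          have hsub : Finset.Ico (posD x D v i + 1) (posD x D v i + C + 2)
              ⊆ (D i) ∩ Finset.Ico (posD x D v i + 1) (posD x D v i + 1 + L) := by
            intro q hmem
            simp only [Finset.mem_Ico] at hmem
            simp only [Finset.mem_inter, Finset.mem_Ico]
            refine ⟨hq q (by omega) (by omega), by omega, by omega⟩
          have := Finset.card_le_card hsub
          simp only [Nat.card_Ico] at this
          have h1 := H1 i (posD x D v i + 1)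
          omega
        obtain ⟨q, hq1, hq2, hq3⟩ := hq
        have h5 : fmap (D i) (curD x D v i + 1) ≤ q := fmap_succ_le hq3 hq1
        have h6 := (curD_succ_le x D v i).2
        have h7 : posD x D (v+1) i ≤ fmap (D i) (curD x D v i + 1) := by
          unfold posD
          exact (fmap_strictMono (D i)).monotone h6
        omega
      -- crude bound on the deletion count
      have hcrude : ((D i) ∩ Finset.Ico a (posD x D (v+1) i)).card ≤ 2 * C := by
        have hsub : (D i) ∩ Finset.Ico a (posD x D (v+1) i)
            ⊆ ((D i) ∩ Finset.Ico a (a + L)) ∪ ((D i) ∩ Finset.Ico (a + L) (a + L + L)) := by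
          intro q hmem
          simp only [Finset.mem_inter, Finset.mem_Ico] at hmem
          simp only [Finset.mem_union, Finset.mem_inter, Finset.mem_Ico]
          rcases Nat.lt_or_ge q (a + L) with h | h
          · exact Or.inl ⟨hmem.1, hmem.2.1, h⟩
          · refine Or.inr ⟨hmem.1, h, by omega⟩
        calc ((D i) ∩ Finset.Ico a (posD x D (v+1) i)).card
            ≤ (((D i) ∩ Finset.Ico a (a + L)) ∪ ((D i) ∩ Finset.Ico (a + L) (a + L + L))).card :=
              Finset.card_le_card hsub
        _ ≤ ((D i) ∩ Finset.Ico a (a + L)).card + ((D i) ∩ Finset.Ico (a + L) (a + L + L)).card :=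
              Finset.card_union_le _ _
        _ ≤ 2 * C := by
              have := H1 i a
              have := H1 i (a + L)
              omega
      have hident := kb_ident x D i anchor (show a ≤ v + 1 by omega)
      have hcm := curD_mono x D a (v+1) (by omega) i
      have hposbd : posD x D (v+1) i < a + L := by omega
      refine ⟨hposbd, ?_⟩
      have hsub : (D i) ∩ Finset.Ico a (posD x D (v+1) i) ⊆ (D i) ∩ Finset.Ico a (a + L) := by
        apply Finset.inter_subset_inter (le_refl _)
        apply Finset.Ico_subset_Ico (le_refl _)
        omega
      have := Finset.card_le_card hsub
      have h1 := H1 i a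
      omega

lemma wD_eq_majority (t : ℕ) :
    wD x D t = majority N (fun j => Xb x (posD x D t j)) := by
  unfold wD bmaBit
  congr 1
  funext j
  exact display_eq x D t j

lemma maj_of_set (t : ℕ) (b : Bool) (S : Finset (Fin N))
    (hS : ∀ i ∈ S, Xb x (posD x D t i) = b)
    (hcard : 2 * (Finset.univ \ S).card < N) : wD x D t = b := by
  rw [wD_eq_majority]
  unfold majority
  have hcu : (Finset.univ : Finset (Fin N)).card = N := by
    rw [Finset.card_univ, Fintype.card_fin]
  have hcS : S.card + (Finset.univ \ S).card = N := by
    have := Finset.card_sdiff_add_card_eq_card (Finset.subset_univ S)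
    omega
  set T := Finset.univ.filter (fun i => Xb x (posD x D t i) = true) with hT
  cases b with
  | true =>
      apply decide_eq_true
      have hsub : S ⊆ T := by
        intro i hi
        simp only [hT, Finset.mem_filter]
        exact ⟨Finset.mem_univ i, hS i hi⟩
      have := Finset.card_le_card hsub
      omega
  | false =>
      apply decide_eq_false
      have hsub : T ⊆ Finset.univ \ S := by
        intro i hi
        simp only [hT, Finset.mem_filter] at hi
        simp only [Finset.mem_sdiff, Finset.mem_univ, true_and]
        intro hiS
        rw [hS i hiS] at hi
        simp at hi
      have := Finset.card_le_card hsub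
      omega

lemma maj_step {C R L : ℕ} (hL : L = R + 2*C + 3)
    (H1 : ∀ (i : Fin N) a, ((D i) ∩ Finset.Ico a (a + L)).card ≤ C)
    (t : ℕ)
    (H2t : 2 * (Finset.univ.filter
        (fun i => ((D i) ∩ Finset.Ico (t + 1 - (R+1)) (t+1)).Nonempty)).card < N)
    (hInva : ∀ t' < t, wD x D t' = Xb x t')
    (hInvc : ∀ i : Fin N, ∃ a, a ≤ t ∧ t ≤ a + R ∧ (posD x D a i = a ∨ a = 0)) :
    wD x D t = Xb x t := by
  set S := Finset.univ.filter (fun i : Fin N => posD x D t i = t) with hSdef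
  apply maj_of_set x D t _ S
  · intro i hi
    simp only [hSdef, Finset.mem_filter] at hi
    rw [hi.2]
  · have hsub : Finset.univ \ S ⊆ Finset.univ.filter
        (fun i => ((D i) ∩ Finset.Ico (t + 1 - (R+1)) (t+1)).Nonempty) := by
      intro i hi
      simp only [hSdef, Finset.mem_sdiff, Finset.mem_filter, Finset.mem_univ, true_and] at hi
      simp only [Finset.mem_filter, Finset.mem_univ, true_and]
      by_contra hempty
      rw [Finset.not_nonempty_iff_eq_empty] at hempty
      have hnomem : ∀ q, t + 1 - (R+1) ≤ q → q ≤ t → q ∉ D i := by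
        intro q hq1 hq2 hq3
        have : q ∈ (D i) ∩ Finset.Ico (t + 1 - (R+1)) (t+1) := by
          simp only [Finset.mem_inter, Finset.mem_Ico]
          exact ⟨hq3, hq1, by omega⟩
        rw [hempty] at this
        simp at this
      obtain ⟨a, ha1, ha2, ha3⟩ := hInvc i
      have haligned : posD x D a i = a := by
        rcases ha3 with h | h
        · exact h
        · subst h
          have h0 : (0:ℕ) ∉ D i := hnomem 0 (by omega) (by omega)
          unfold posD
          rw [curD_zero]
          exact fmap_zero_of_notmem h0
      have := aligned_persist x D i ha1 haligned
        (fun v hv1 hv2 => hInva v (by omega))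
        (fun q hq1 hq2 => hnomem q (by omega) (by omega))
      exact hi this
    have := Finset.card_le_card hsub
    omega

lemma posD_adv_lt (v : ℕ) (i : Fin N) (h : curD x D (v+1) i = curD x D v i + 1) :
    posD x D v i < posD x D (v+1) i := by
  unfold posD
  rw [h]
  exact fmap_strictMono (D i) (by omega)

/-- The resynchronisation contradiction: a trace cannot stay misaligned for `R+1` steps. -/
lemma resync {C M R L B : ℕ} (hC : 1 ≤ C) (hM : 1 ≤ M)
    (hR : R = (2*C+2)*(M+1)) (hL : L = R + 2*C + 3)
    (H1 : ∀ (i : Fin N) a, ((D i) ∩ Finset.Ico a (a + L)).card ≤ C)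
    (HMP : ∀ j, 1 ≤ j → j ≤ C → ∀ a, a + M + 2 ≤ B →
      ∃ v, a ≤ v ∧ v < a + M ∧ Xb x (v + j) ≠ Xb x v)
    (i : Fin N) (a t : ℕ) (anchor : posD x D a i = a ∨ a = 0)
    (hta : t + 1 = a + R + 1) (htB : t + 2 ≤ B)
    (hw : ∀ v, v ≤ t → wD x D v = Xb x v)
    (hlow : ∀ v, v ≤ t + 1 → v ≤ posD x D v i)
    (hnoal : ∀ v, a < v → v ≤ t + 1 → posD x D v i ≠ v) : False := by
  have hat : a ≤ t := by
    have : 8 ≤ R := by nlinarith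
    omega
  have hposa : a ≤ posD x D a i := hlow a (by omega)
  -- stall and skip sets
  set ST := (Finset.Ico a (t+1)).filter (fun v => curD x D (v+1) i = curD x D v i) with hSTdef
  set SKP := (Finset.Ico a (t+1)).filter
      (fun v => posD x D v i + 2 ≤ posD x D (v+1) i) with hSKPdef
  -- bound on stalls via telescoping
  have hSTbd : ST.card + (curD x D (t+1) i - curD x D a i) ≤ t + 1 - a := by
    have htel := curD_telescope x D a (t+1) (by omega) i
    have h1 : ST.card = ∑ v ∈ Finset.Ico a (t+1),
        (if curD x D (v+1) i = curD x D v i then 1 else 0) := by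
      rw [hSTdef, Finset.card_filter]
    have h2 : ∀ v ∈ Finset.Ico a (t+1),
        (if curD x D (v+1) i = curD x D v i then 1 else 0)
          + (curD x D (v+1) i - curD x D v i) ≤ 1 := by
      intro v _
      have := curD_succ_le x D v i
      split <;> omega
    have h3 : ∑ v ∈ Finset.Ico a (t+1),
        ((if curD x D (v+1) i = curD x D v i then 1 else 0)
          + (curD x D (v+1) i - curD x D v i)) ≤ ∑ v ∈ Finset.Ico a (t+1), 1 :=
      Finset.sum_le_sum h2
    rw [Finset.sum_add_distrib] at h3
    simp only [Finset.sum_const, Nat.card_Ico, smul_eq_mul, mul_one] at h3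
    omega
  -- bound on skips via telescoping
  have hSKPbd : SKP.card ≤ ((D i) ∩ Finset.Ico a (posD x D (t+1) i)).card := by
    have htel := del_telescope x D a (t+1) (by omega) i
    have h1 : SKP.card = ∑ v ∈ Finset.Ico a (t+1),
        (if posD x D v i + 2 ≤ posD x D (v+1) i then 1 else 0) := by
      rw [hSKPdef, Finset.card_filter]
    have h2 : ∀ v ∈ Finset.Ico a (t+1),
        (if posD x D v i + 2 ≤ posD x D (v+1) i then 1 else 0)
          ≤ ((D i) ∩ Finset.Ico (posD x D v i) (posD x D (v+1) i)).card := by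
      intro v _
      split
      · rename_i hskip
        have hid := posD_ident x D v (v+1) (by omega) i
        have := curD_succ_le x D v i
        omega
      · omega
    have h3 := Finset.sum_le_sum h2
    rw [← h1, ← htel] at h3
    have hsub : (D i) ∩ Finset.Ico (posD x D a i) (posD x D (t+1) i)
        ⊆ (D i) ∩ Finset.Ico a (posD x D (t+1) i) := by
      apply Finset.inter_subset_inter (le_refl _)
      apply Finset.Ico_subset_Ico _ (le_refl _)
      omega
    have := Finset.card_le_card hsub
    omega
  -- global bound via KB
  have hKB := KB x D hL H1 i anchor (show a ≤ t + 1 by omega) (by omega)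
  have hident := kb_ident x D i anchor (show a ≤ t + 1 by omega)
  have hp1 : t + 2 ≤ posD x D (t+1) i := by
    have h1 := hlow (t+1) (by omega)
    have h2 := hnoal (t+1) (by omega) (by omega)
    omega
  have hcm := curD_mono x D a (t+1) (by omega) i
  have hSTC : ST.card + 1 ≤ C := by omega
  have hSKC : SKP.card ≤ C := by omega
  -- every block contains a stall or a skip
  have hblock : ∀ b, b < 2*C+2 → ∃ v, v ∈ ST ∪ SKP ∧
      a + 1 + b*(M+1) ≤ v ∧ v < a + 1 + (b+1)*(M+1) := by
    intro b hb
    by_contra hno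
    push_neg at hno
    set ab := a + 1 + b*(M+1) with hab
    have habt : ab + M ≤ t := by
      have h1 : (b+1)*(M+1) ≤ (2*C+2)*(M+1) := Nat.mul_le_mul_right _ (by omega)
      have : ab + M + 1 = a + (b+1)*(M+1) + 1 := by rw [hab]; ring
      omega
    have hstep : ∀ v, ab ≤ v → v < ab + M + 1 →
        curD x D (v+1) i = curD x D v i + 1 ∧ posD x D (v+1) i = posD x D v i + 1 := by
      intro v hv1 hv2
      have hvmem : v ∈ Finset.Ico a (t+1) := by
        simp only [Finset.mem_Ico]
        omega
      have hbexp : a + 1 + (b+1)*(M+1) = ab + M + 1 := by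
        rw [hab]; ring
      have hnost : ¬ (curD x D (v+1) i = curD x D v i) := by
        intro hst
        have hmem : v ∈ ST ∪ SKP := by
          apply Finset.mem_union_left
          simp only [hSTdef, Finset.mem_filter]
          exact ⟨hvmem, hst⟩
        have := hno v hmem (by omega)
        omega
      have hnosk : ¬ (posD x D v i + 2 ≤ posD x D (v+1) i) := by
        intro hsk
        have hmem : v ∈ ST ∪ SKP := by
          apply Finset.mem_union_right
          simp only [hSKPdef, Finset.mem_filter]
          exact ⟨hvmem, hsk⟩
        have := hno v hmem (by omega)
        omega
      have hcs := curD_succ_le x D v i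
      have hadv : curD x D (v+1) i = curD x D v i + 1 := by omega
      have := posD_adv_lt x D v i hadv
      exact ⟨hadv, by omega⟩
    have haff : ∀ k, k ≤ M → posD x D (ab + k) i = posD x D ab i + k := by
      intro k hk
      induction k with
      | zero => simp
      | succ k ih =>
          have h1 := ih (by omega)
          have h2 := (hstep (ab + k) (by omega) (by omega)).2
          have : ab + (k+1) = (ab + k) + 1 := by omega
          rw [this, h2, h1]
          omega
    set jn := posD x D ab i - ab with hjn
    have hjn1 : 1 ≤ jn := by
      have h1 := hlow ab (by omega)
      have h2 := hnoal ab (by omega) (by omega)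
      omega
    have hjnC : jn ≤ C := by
      have hKBa := KB x D hL H1 i anchor (show a ≤ ab by omega) (by omega)
      have hidenta := kb_ident x D i anchor (show a ≤ ab by omega)
      omega
    have hagree : ∀ k, k < M → Xb x ((ab + k) + jn) = Xb x (ab + k) := by
      intro k hk
      have hadv := (hstep (ab + k) (by omega) (by omega)).1
      have hdisp : Xb x (posD x D (ab+k) i) = wD x D (ab+k) := by
        by_contra hst
        rw [curD_succ_stall x D (ab+k) i hst] at hadv
        omega
      have hwv : wD x D (ab+k) = Xb x (ab+k) := hw (ab+k) (by omega)
      have hpk : posD x D (ab+k) i = (ab + k) + jn := by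
        rw [haff k (by omega)]
        omega
      rw [hpk] at hdisp
      rw [hdisp, hwv]
    obtain ⟨v0, hv01, hv02, hv03⟩ := HMP jn hjn1 hjnC ab (by omega)
    exact hv03 (by
      have := hagree (v0 - ab) (by omega)
      have hrw : ab + (v0 - ab) = v0 := by omega
      rwa [hrw] at this)
  -- counting: 2C+2 disjoint blocks each meet ST ∪ SKP
  have hcount : 2*C + 2 ≤ (ST ∪ SKP).card := by
    classical
    set g : ℕ → ℕ := fun b => if hb : b < 2*C+2 then (hblock b hb).choose else 0 with hgdef
    have hg : ∀ b, b < 2*C+2 → (g b ∈ ST ∪ SKP ∧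
        a + 1 + b*(M+1) ≤ g b ∧ g b < a + 1 + (b+1)*(M+1)) := by
      intro b hb
      have hspec := (hblock b hb).choose_spec
      simp only [hgdef, dif_pos hb]
      exact hspec
    have : (Finset.range (2*C+2)).card ≤ (ST ∪ SKP).card := by
      apply Finset.card_le_card_of_injOn g
      · intro b hb
        simp only [Finset.mem_coe, Finset.mem_range] at hb
        exact (hg b hb).1
      · intro b1 hb1 b2 hb2 heq
        simp only [Finset.mem_coe, Finset.mem_range] at hb1 hb2
        by_contra hne
        rcases Nat.lt_or_ge b1 b2 with h | h
        · have h1 := (hg b1 hb1).2.2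
          have h2 := (hg b2 hb2).2.1
          rw [heq] at h1
          have : (b1+1)*(M+1) ≤ b2*(M+1) := Nat.mul_le_mul_right _ (by omega)
          omega
        · have hlt : b2 < b1 := by omega
          have h1 := (hg b2 hb2).2.2
          have h2 := (hg b1 hb1).2.1
          rw [← heq] at h1
          have : (b2+1)*(M+1) ≤ b1*(M+1) := Nat.mul_le_mul_right _ (by omega)
          omega
    simpa using this
  have := Finset.card_union_le ST SKP
  omega

/-- The deterministic correctness theorem for BMA. -/
theorem det_main {C M R L B : ℕ} (hC : 1 ≤ C) (hM : 1 ≤ M)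
    (hR : R = (2*C+2)*(M+1)) (hL : L = R + 2*C + 3)
    (H1 : ∀ (i : Fin N) a, ((D i) ∩ Finset.Ico a (a + L)).card ≤ C)
    (H2 : ∀ t, t < B → 2 * (Finset.univ.filter
        (fun i => ((D i) ∩ Finset.Ico (t + 1 - (R+1)) (t+1)).Nonempty)).card < N)
    (HMP : ∀ j, 1 ≤ j → j ≤ C → ∀ a, a + M + 2 ≤ B →
      ∃ v, a ≤ v ∧ v < a + M ∧ Xb x (v + j) ≠ Xb x v) :
    ∀ t, t < B → wD x D t = Xb x t := by
  have master : ∀ t, t < B →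
      ((∀ t' < t, wD x D t' = Xb x t') ∧ (∀ i : Fin N, t ≤ posD x D t i) ∧
        (∀ i : Fin N, ∃ a, a ≤ t ∧ t ≤ a + R ∧ (posD x D a i = a ∨ a = 0))) := by
    intro t
    induction t using Nat.strong_induction_on with
    | _ t IH =>
      intro htB
      match t with
      | 0 =>
          refine ⟨by omega, fun i => Nat.zero_le _, fun i => ⟨0, le_refl _, by omega, Or.inr rfl⟩⟩
      | (s+1) =>
          have IHs := IH s (by omega) (by omega)
          have hws : wD x D s = Xb x s :=
            maj_step x D hL H1 s (H2 s (by omega)) IHs.1 IHs.2.2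
          have ha' : ∀ t' < s + 1, wD x D t' = Xb x t' := by
            intro t' ht'
            rcases Nat.lt_or_ge t' s with h | h
            · exact IHs.1 t' h
            · have : t' = s := by omega
              subst this
              exact hws
          have hb' : ∀ i : Fin N, s + 1 ≤ posD x D (s+1) i := by
            intro i
            by_cases hali : posD x D s i = s
            · have hadv : curD x D (s+1) i = curD x D s i + 1 := by
                apply curD_succ_adv
                rw [hali, hws]
              have := posD_adv_lt x D s i hadv
              omega
            · have h1 := IHs.2.1 i
              have h2 := posD_mono x D s (s+1) (by omega) i
              omega
          refine ⟨ha', hb', ?_⟩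
          intro i
          by_cases hali1 : posD x D (s+1) i = s + 1
          · exact ⟨s+1, le_refl _, by omega, Or.inl hali1⟩
          · obtain ⟨a, ha1, ha2, ha3⟩ := IHs.2.2 i
            by_cases hok : s + 1 ≤ a + R
            · exact ⟨a, by omega, hok, ha3⟩
            · have hta : s + 1 = a + R + 1 := by omega
              by_cases hex : ∃ v, a < v ∧ v ≤ s + 1 ∧ posD x D v i = v
              · obtain ⟨v, hv1, hv2, hv3⟩ := hex
                exact ⟨v, hv2, by omega, Or.inl hv3⟩
              · push_neg at hex
                exfalso
                apply resync x D hC hM hR hL H1 HMP i a s ha3 hta (by omega)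
                · intro v hv
                  exact ha' v (by omega)
                · intro v hv
                  rcases Nat.lt_or_ge v (s+1) with h | h
                  · exact (IH v (by omega) (by omega)).2.1 i
                  · have : v = s + 1 := by omega
                    subst this
                    exact hb' i
                · exact hex
  intro t htB
  have Invt := master t htB
  exact maj_step x D hL H1 t (H2 t htB) Invt.1 Invt.2.2

end Det

section DesertFree

variable (x : List Bool)

lemma subword_getD (a b k : ℕ) (hk : k < b + 1 - a) :
    (subword x a b).getD k false = Xb x (a + k) := by
  unfold subword Xb
  rw [List.getD_eq_getElem?_getD, List.getD_eq_getElem?_getD,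
    List.getElem?_take, if_pos hk, List.getElem?_drop]

lemma subword_length (a b : ℕ) :
    (subword x a b).length = min (b + 1 - a) (x.length - a) := by
  unfold subword
  rw [List.length_take, List.length_drop]

lemma desert_of_agree {C m j a : ℕ} (hj1 : 1 ≤ j) (hjC : j ≤ C) (hjm : j ≤ 2*m+1)
    (hlen : a + (2*m+1) ≤ x.length)
    (hagree : ∀ v, a ≤ v → v < a + (2*m+1) → Xb x (v + j) = Xb x v) :
    isDesert C (2*m+1) (subword x a (a + 2*m)) := by
  refine ⟨subword x a (a + j - 1), ?_, ?_, ?_, ?_⟩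
  · have : (subword x a (a + j - 1)).length = j := by
      rw [subword_length]
      omega
    intro hnil
    rw [hnil] at this
    simp at this
    omega
  · have : (subword x a (a + j - 1)).length = j := by
      rw [subword_length]
      omega
    omega
  · rw [subword_length]
    omega
  · intro k hk
    rw [subword_length] at hk
    have hsl : (subword x a (a + j - 1)).length = j := by
      rw [subword_length]
      omega
    rw [hsl]
    rw [subword_getD x a (a + 2*m) k (by omega), subword_getD x a (a + j - 1) (k % j)
      (by have := Nat.mod_lt k (show 0 < j by omega); omega)]
    -- strong induction claim
    have main : ∀ k, k < 2*m+1 → Xb x (a + k) = Xb x (a + k % j) := by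
      intro k
      induction k using Nat.strong_induction_on with
      | _ k IH =>
        intro hk2
        rcases Nat.lt_or_ge k j with h | h
        · rw [Nat.mod_eq_of_lt h]
        · have h1 : Xb x ((a + (k - j)) + j) = Xb x (a + (k - j)) := by
            apply hagree
            · omega
            · omega
          have h2 : a + (k - j) + j = a + k := by omega
          rw [h2] at h1
          have h3 := IH (k - j) (by omega) (by omega)
          have h4 : (k - j) % j = k % j := by
            conv_rhs => rw [show k = (k - j) + j by omega]
            rw [Nat.add_mod_right]
          rw [h1, h3, h4]
    exact main k (by omega)

lemma HMP_of_noDesert {C m : ℕ} (hC : 1 ≤ C) (hCm : C ≤ 2*m+1)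
    (hnd : ¬ hasDesert C (2*m+1) x) :
    ∀ j, 1 ≤ j → j ≤ C → ∀ a, a + (2*m+1) + 2 ≤ x.length →
      ∃ v, a ≤ v ∧ v < a + (2*m+1) ∧ Xb x (v + j) ≠ Xb x v := by
  intro j hj1 hjC a ha
  by_contra hno
  push_neg at hno
  apply hnd
  refine ⟨a, a + 2*m, desert_of_agree x hj1 hjC (by omega) (by omega) ?_⟩
  intro v hv1 hv2
  exact hno v hv1 hv2

lemma HMP_of_firstDeep {C m r : ℕ} (hC : 1 ≤ C) (hCm : C ≤ 2*m+1)
    (hfd : firstDeep C m x r) :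
    ∀ j, 1 ≤ j → j ≤ C → ∀ a, a + (2*m+1) + 2 ≤ r + m + 1 →
      ∃ v, a ≤ v ∧ v < a + (2*m+1) ∧ Xb x (v + j) ≠ Xb x v := by
  intro j hj1 hjC a ha
  by_contra hno
  push_neg at hno
  -- the desert of x at r gives r + m + 1 ≤ x.length
  have hrm : m ≤ r := hfd.1.1
  have hlen : r + m + 1 ≤ x.length := by
    obtain ⟨s, hs1, hs2, hs3, hs4⟩ := hfd.1.2
    rw [subword_length] at hs3
    omega
  have hdeep : deepInDesert C m x (a + m) := by
    constructor
    · omega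
    · have h1 : a + m - m = a := by omega
      have h2 : a + m + m = a + 2*m := by omega
      rw [h1, h2]
      refine desert_of_agree x hj1 hjC (by omega) (by omega) ?_
      intro v hv1 hv2
      exact hno v hv1 hv2
  exact hfd.2 (a + m) (by omega) hdeep

variable {N : ℕ} (D : Fin N → Finset ℕ)

lemma BMA_eq_wD (n : ℕ) :
    BMA n N (fun i => trace x (D i)) = (List.range n).map (fun t => wD x D t) := rfl

lemma BMA_all (n : ℕ) (hlen : x.length = n)
    (h : ∀ t, t < n → wD x D t = Xb x t) :
    BMA n N (fun i => trace x (D i)) = x := by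
  rw [BMA_eq_wD]
  apply List.ext_getElem
  · simp [hlen]
  · intro t h1 h2
    simp only [List.getElem_map, List.getElem_range]
    rw [List.length_map, List.length_range] at h1
    rw [h t h1]
    unfold Xb
    exact List.getD_eq_getElem x false h2

lemma BMA_prefix (n K : ℕ) (hlen : x.length = n) (hK : K < n)
    (h : ∀ t, t < K + 1 → wD x D t = Xb x t) :
    subword (BMA n N (fun i => trace x (D i))) 0 K = subword x 0 K := by
  unfold subword
  rw [List.drop_zero, List.drop_zero]
  apply List.ext_getElem
  · rw [List.length_take, List.length_take, BMA_eq_wD, List.length_map, List.length_range, hlen]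
  · intro t h1 h2
    rw [List.length_take] at h1
    have ht : t < K + 1 := by
      have := lt_of_lt_of_le h1 inf_le_left
      omega
    rw [List.getElem_take, List.getElem_take]
    simp only [BMA_eq_wD, List.getElem_map, List.getElem_range]
    rw [h t ht]
    unfold Xb
    apply List.getD_eq_getElem

end DesertFree

section Prob

variable (δ : ℝ) (n : ℕ)

/-- Single-trace probability. -/
noncomputable def pr1 (P : Finset ℕ → Prop) : ℝ :=
  ∑ D ∈ (Finset.range n).powerset, delWeight δ n D * (if P D then 1 else 0)

variable {δ}

lemma ite01_nonneg (p : Prop) [Decidable p] : (0:ℝ) ≤ if p then 1 else 0 := by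
  split <;> norm_num

lemma delWeight_nonneg (hδ0 : 0 ≤ δ) (hδ1 : δ ≤ 1) (D : Finset ℕ) :
    0 ≤ delWeight δ n D :=
  mul_nonneg (pow_nonneg hδ0 _) (pow_nonneg (by linarith) _)

lemma mass_one (hδ0 : 0 ≤ δ) (hδ1 : δ ≤ 1) (s : Finset ℕ) :
    ∑ D ∈ s.powerset, δ ^ D.card * (1 - δ) ^ (s.card - D.card) = 1 := by
  have h := Finset.prod_add (fun _ : ℕ => δ) (fun _ : ℕ => 1 - δ) s
  have h1 : ∏ i ∈ s, (δ + (1 - δ)) = 1 := by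
    rw [Finset.prod_congr rfl (fun i _ => by ring_nf : ∀ i ∈ s, δ + (1 - δ) = 1)]
    exact Finset.prod_const_one
  rw [h1] at h
  refine Eq.trans ?_ h.symm
  apply Finset.sum_congr rfl
  intro t ht
  rw [Finset.mem_powerset] at ht
  rw [Finset.prod_const, Finset.prod_const, Finset.card_sdiff_of_subset ht]

lemma sum_delWeight (hδ0 : 0 ≤ δ) (hδ1 : δ ≤ 1) :
    ∑ D ∈ (Finset.range n).powerset, delWeight δ n D = 1 := by
  have h2 := mass_one hδ0 hδ1 (Finset.range n)
  rw [Finset.card_range] at h2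
  rw [← h2]
  exact Finset.sum_congr rfl (fun D hD => rfl)

lemma pr1_nonneg (hδ0 : 0 ≤ δ) (hδ1 : δ ≤ 1) (P : Finset ℕ → Prop) : 0 ≤ pr1 δ n P := by
  apply Finset.sum_nonneg
  intro D hD
  exact mul_nonneg (delWeight_nonneg n hδ0 hδ1 D) (ite01_nonneg _)

lemma pr1_mono (hδ0 : 0 ≤ δ) (hδ1 : δ ≤ 1) (P Q : Finset ℕ → Prop)
    (h : ∀ D, D ⊆ Finset.range n → P D → Q D) : pr1 δ n P ≤ pr1 δ n Q := by
  apply Finset.sum_le_sum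
  intro D hD
  rw [Finset.mem_powerset] at hD
  have hw := delWeight_nonneg n hδ0 hδ1 D
  by_cases hP : P D
  · rw [if_pos hP, if_pos (h D hD hP)]
  · rw [if_neg hP]
    rw [mul_zero]
    exact mul_nonneg hw (ite01_nonneg _)

lemma pr1_union {α : Type*} (hδ0 : 0 ≤ δ) (hδ1 : δ ≤ 1) (A : Finset α)
    (P : α → Finset ℕ → Prop) :
    pr1 δ n (fun D => ∃ a ∈ A, P a D) ≤ ∑ a ∈ A, pr1 δ n (P a) := by
  unfold pr1
  rw [Finset.sum_comm]
  apply Finset.sum_le_sum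
  intro D hD
  have hw := delWeight_nonneg n hδ0 hδ1 D
  by_cases hP : ∃ a ∈ A, P a D
  · obtain ⟨a0, ha0, hPa0⟩ := hP
    rw [if_pos ⟨a0, ha0, hPa0⟩]
    calc delWeight δ n D * 1 = delWeight δ n D * (if P a0 D then 1 else 0) := by
          rw [if_pos hPa0]
    _ ≤ ∑ a ∈ A, delWeight δ n D * (if P a D then 1 else 0) := by
          apply Finset.single_le_sum (f := fun a => delWeight δ n D * (if P a D then 1 else 0))
            _ ha0
          intro a ha
          exact mul_nonneg hw (ite01_nonneg _)
  · rw [if_neg hP]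
    rw [mul_zero]
    apply Finset.sum_nonneg
    intro a ha
    exact mul_nonneg hw (ite01_nonneg _)

lemma pr1_subset_eq (hδ0 : 0 ≤ δ) (hδ1 : δ ≤ 1) (S : Finset ℕ) (hS : S ⊆ Finset.range n) :
    pr1 δ n (fun D => S ⊆ D) = δ ^ S.card := by
  unfold pr1
  simp only [mul_ite, mul_one, mul_zero]
  rw [← Finset.sum_filter]
  have hbij : ∀ E ∈ ((Finset.range n) \ S).powerset, (S ∪ E) ∈
      ((Finset.range n).powerset.filter (fun D => S ⊆ D)) := by
    intro E hE
    rw [Finset.mem_powerset] at hE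
    rw [Finset.mem_filter, Finset.mem_powerset]
    constructor
    · apply Finset.union_subset hS
      exact hE.trans (Finset.sdiff_subset)
    · exact Finset.subset_union_left
  rw [show (δ:ℝ) ^ S.card = δ ^ S.card *
      (∑ E ∈ ((Finset.range n) \ S).powerset,
        δ ^ E.card * (1 - δ) ^ (((Finset.range n) \ S).card - E.card)) by
    rw [mass_one hδ0 hδ1]; ring]
  rw [Finset.mul_sum]
  apply Finset.sum_nbij' (i := fun D => D \ S) (j := fun E => S ∪ E)
  · intro D hD
    rw [Finset.mem_filter, Finset.mem_powerset] at hD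
    rw [Finset.mem_powerset]
    exact Finset.sdiff_subset_sdiff hD.1 (le_refl _)
  · intro E hE
    exact hbij E hE
  · intro D hD
    rw [Finset.mem_filter] at hD
    rw [Finset.union_sdiff_of_subset hD.2]
  · intro E hE
    rw [Finset.mem_powerset] at hE
    rw [Finset.union_sdiff_cancel_left]
    apply Finset.disjoint_left.2
    intro q hq1 hq2
    have := hE hq2
    rw [Finset.mem_sdiff] at this
    exact this.2 hq1
  · intro D hD
    rw [Finset.mem_filter, Finset.mem_powerset] at hD
    unfold delWeight
    have hc : D.card = S.card + (D \ S).card := by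
      rw [← Finset.card_sdiff_add_card_eq_card hD.2]
      omega
    have hc2 : ((Finset.range n) \ S).card = n - S.card := by
      rw [Finset.card_sdiff_of_subset hS, Finset.card_range]
    rw [hc, hc2, pow_add]
    have hc3 : n - (S.card + (D \ S).card) = n - S.card - (D \ S).card := by omega
    rw [hc3]
    ring

lemma pr1_subset_le (hδ0 : 0 ≤ δ) (hδ1 : δ ≤ 1) (S : Finset ℕ) (k : ℕ) (hk : S.card = k) :
    pr1 δ n (fun D => S ⊆ D) ≤ δ ^ k := by
  by_cases hS : S ⊆ Finset.range n
  · rw [pr1_subset_eq (n := n) hδ0 hδ1 S hS, hk]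
  · have hzero : pr1 δ n (fun D => S ⊆ D) = 0 := by
      apply Finset.sum_eq_zero
      intro D hD
      rw [Finset.mem_powerset] at hD
      rw [if_neg, mul_zero]
      intro hSD
      exact hS (hSD.trans hD)
    rw [hzero]
    exact pow_nonneg hδ0 k

lemma pr1_card_window (hδ0 : 0 ≤ δ) (hδ1 : δ ≤ 1) (W : Finset ℕ) (k : ℕ) :
    pr1 δ n (fun D => k ≤ (D ∩ W).card) ≤ ((W.card : ℝ)) ^ k * δ ^ k := by
  have h1 : pr1 δ n (fun D => k ≤ (D ∩ W).card)
      ≤ pr1 δ n (fun D => ∃ S ∈ W.powersetCard k, S ⊆ D) := by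
    apply pr1_mono (n := n) hδ0 hδ1
    intro D hD hcard
    obtain ⟨S, hS1, hS2⟩ := Finset.exists_subset_card_eq hcard
    refine ⟨S, ?_, ?_⟩
    · rw [Finset.mem_powersetCard]
      exact ⟨hS1.trans Finset.inter_subset_right, hS2⟩
    · exact hS1.trans Finset.inter_subset_left
  have h2 := pr1_union (n := n) hδ0 hδ1 (W.powersetCard k) (fun S D => S ⊆ D)
  have h3 : ∑ S ∈ W.powersetCard k, pr1 δ n (fun D => S ⊆ D)
      ≤ ∑ S ∈ W.powersetCard k, δ ^ k := by
    apply Finset.sum_le_sum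
    intro S hS
    rw [Finset.mem_powersetCard] at hS
    exact pr1_subset_le (n := n) hδ0 hδ1 S k hS.2
  rw [Finset.sum_const, Finset.card_powersetCard, nsmul_eq_mul] at h3
  have h4 : ((W.card.choose k : ℝ)) * δ ^ k ≤ ((W.card : ℝ)) ^ k * δ ^ k := by
    apply mul_le_mul_of_nonneg_right _ (pow_nonneg hδ0 k)
    calc ((W.card.choose k : ℝ)) ≤ ((W.card ^ k : ℕ) : ℝ) := by
          exact_mod_cast Nat.choose_le_pow W.card k
    _ = ((W.card : ℝ)) ^ k := by push_cast; ring
  linarith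

lemma pr1_nonempty_le (hδ0 : 0 ≤ δ) (hδ1 : δ ≤ 1) (W : Finset ℕ) :
    pr1 δ n (fun D => (D ∩ W).Nonempty) ≤ ((W.card : ℝ)) * δ := by
  have h1 : pr1 δ n (fun D => (D ∩ W).Nonempty) ≤ pr1 δ n (fun D => 1 ≤ (D ∩ W).card) := by
    apply pr1_mono (n := n) hδ0 hδ1
    intro D hD hne
    exact Finset.one_le_card.2 hne
  have h2 := pr1_card_window (n := n) hδ0 hδ1 W 1
  rw [pow_one, pow_one] at h2
  linarith

-- N-trace machinery
variable {N : ℕ}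

lemma prSets_total (hδ0 : 0 ≤ δ) (hδ1 : δ ≤ 1) :
    ∑ Ds ∈ Fintype.piFinset (fun _ : Fin N => (Finset.range n).powerset),
      (∏ i, delWeight δ n (Ds i)) = 1 := by
  rw [← Finset.prod_univ_sum]
  rw [Finset.prod_congr rfl (fun i _ => sum_delWeight n hδ0 hδ1)]
  exact Finset.prod_const_one

lemma prSets_nonneg (hδ0 : 0 ≤ δ) (hδ1 : δ ≤ 1) (P : (Fin N → Finset ℕ) → Prop) :
    0 ≤ prSets δ n N P := by
  apply Finset.sum_nonneg
  intro Ds hDs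
  exact mul_nonneg (Finset.prod_nonneg (fun i _ => delWeight_nonneg n hδ0 hδ1 _)) (ite01_nonneg _)

lemma prSets_mono (hδ0 : 0 ≤ δ) (hδ1 : δ ≤ 1) (P Q : (Fin N → Finset ℕ) → Prop)
    (h : ∀ Ds : Fin N → Finset ℕ, (∀ i, Ds i ⊆ Finset.range n) → P Ds → Q Ds) :
    prSets δ n N P ≤ prSets δ n N Q := by
  apply Finset.sum_le_sum
  intro Ds hDs
  rw [Fintype.mem_piFinset] at hDs
  have hw : (0:ℝ) ≤ ∏ i : Fin N, delWeight δ n (Ds i) :=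
    Finset.prod_nonneg (fun i _ => delWeight_nonneg n hδ0 hδ1 (Ds i))
  by_cases hP : P Ds
  · rw [if_pos hP, if_pos (h Ds (fun i => Finset.mem_powerset.1 (hDs i)) hP)]
  · rw [if_neg hP, mul_zero]
    exact mul_nonneg hw (ite01_nonneg _)

lemma prSets_compl (hδ0 : 0 ≤ δ) (hδ1 : δ ≤ 1) (P : (Fin N → Finset ℕ) → Prop) :
    prSets δ n N P = 1 - prSets δ n N (fun Ds => ¬ P Ds) := by
  have h : prSets δ n N P + prSets δ n N (fun Ds => ¬ P Ds) = 1 := by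
    have htot := prSets_total (n := n) (N := N) hδ0 hδ1
    calc prSets δ n N P + prSets δ n N (fun Ds => ¬ P Ds)
        = ∑ Ds ∈ Fintype.piFinset (fun _ : Fin N => (Finset.range n).powerset),
            (∏ i, delWeight δ n (Ds i)) := by
          unfold prSets
          rw [← Finset.sum_add_distrib]
          apply Finset.sum_congr rfl
          intro Ds hDs
          by_cases hP : P Ds
          · rw [if_pos hP, if_neg (by simpa using hP)]
            ring
          · rw [if_neg hP, if_pos hP]
            ring
    _ = 1 := htot
  linarith

lemma prSets_union {α : Type*} (hδ0 : 0 ≤ δ) (hδ1 : δ ≤ 1) (A : Finset α)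
    (P : α → (Fin N → Finset ℕ) → Prop) :
    prSets δ n N (fun Ds => ∃ a ∈ A, P a Ds) ≤ ∑ a ∈ A, prSets δ n N (P a) := by
  unfold prSets
  rw [Finset.sum_comm]
  apply Finset.sum_le_sum
  intro Ds hDs
  have hw : (0:ℝ) ≤ ∏ i : Fin N, delWeight δ n (Ds i) :=
    Finset.prod_nonneg (fun i _ => delWeight_nonneg n hδ0 hδ1 (Ds i))
  by_cases hP : ∃ a ∈ A, P a Ds
  · obtain ⟨a0, ha0, hPa0⟩ := hP
    rw [if_pos (show (fun Ds => ∃ a ∈ A, P a Ds) Ds from ⟨a0, ha0, hPa0⟩)]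
    calc (∏ i, delWeight δ n (Ds i)) * 1
        = (∏ i, delWeight δ n (Ds i)) * (if P a0 Ds then 1 else 0) := by rw [if_pos hPa0]
    _ ≤ ∑ a ∈ A, (∏ i, delWeight δ n (Ds i)) * (if P a Ds then 1 else 0) := by
          apply Finset.single_le_sum
            (f := fun a => (∏ i, delWeight δ n (Ds i)) * (if P a Ds then 1 else 0)) _ ha0
          intro a ha
          exact mul_nonneg hw (ite01_nonneg _)
  · rw [if_neg hP, mul_zero]
    apply Finset.sum_nonneg
    intro a ha
    exact mul_nonneg hw (ite01_nonneg _)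

lemma prSets_inter_coords (hδ0 : 0 ≤ δ) (hδ1 : δ ≤ 1) (S : Finset (Fin N))
    (Q : Finset ℕ → Prop) :
    prSets δ n N (fun Ds => ∀ i ∈ S, Q (Ds i)) = (pr1 δ n Q) ^ S.card := by
  unfold prSets
  dsimp only
  have hsummand : ∀ Ds : Fin N → Finset ℕ,
      (∏ i, delWeight δ n (Ds i))
          * (@ite ℝ (∀ i ∈ S, Q (Ds i)) (Classical.propDecidable _) 1 0)
        = ∏ i : Fin N, (delWeight δ n (Ds i)
            * (if i ∈ S then (if Q (Ds i) then 1 else 0) else 1)) := by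
    intro Ds
    rw [Finset.prod_mul_distrib]
    congr 1
    rw [Finset.prod_ite_mem Finset.univ S (fun i => if Q (Ds i) then (1:ℝ) else 0),
      Finset.univ_inter, Finset.prod_boole]
    by_cases hQ : ∀ i ∈ S, Q (Ds i)
    · rw [if_pos hQ, if_pos hQ]
    · rw [if_neg hQ, if_neg hQ]
  refine Eq.trans (Finset.sum_congr rfl (fun Ds _ => hsummand Ds)) ?_
  have hpus := (Finset.prod_univ_sum (fun _ : Fin N => (Finset.range n).powerset)
    (fun i D => delWeight δ n D * (if i ∈ S then (if Q D then (1:ℝ) else 0) else 1)))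
  rw [← hpus]
  have hfac : ∀ i : Fin N,
      (∑ D ∈ (Finset.range n).powerset, delWeight δ n D
          * (if i ∈ S then (if Q D then (1:ℝ) else 0) else 1))
        = if i ∈ S then pr1 δ n Q else 1 := by
    intro i
    by_cases hi : i ∈ S
    · rw [if_pos hi]
      apply Finset.sum_congr rfl
      intro D hD
      rw [if_pos hi]
    · rw [if_neg hi]
      rw [Finset.sum_congr rfl (fun D _ => by rw [if_neg hi, mul_one])]
      exact sum_delWeight n hδ0 hδ1
  rw [Finset.prod_congr rfl (fun i _ => hfac i)]
  rw [Finset.prod_ite_mem Finset.univ S (fun _ => pr1 δ n Q), Finset.univ_inter,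
    Finset.prod_const]

lemma prSets_count (hδ0 : 0 ≤ δ) (hδ1 : δ ≤ 1) (Q : Finset ℕ → Prop)
    [∀ D, Decidable (Q D)] (h : ℕ) :
    prSets δ n N (fun Ds => h ≤ (Finset.univ.filter (fun i => Q (Ds i))).card)
      ≤ ((N.choose h : ℝ)) * (pr1 δ n Q) ^ h := by
  have h1 : prSets δ n N (fun Ds => h ≤ (Finset.univ.filter (fun i => Q (Ds i))).card)
      ≤ prSets δ n N (fun Ds => ∃ S ∈ (Finset.univ : Finset (Fin N)).powersetCard h,
          ∀ i ∈ S, Q (Ds i)) := by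
    apply prSets_mono (n := n) hδ0 hδ1
    intro Ds hDs hcard
    obtain ⟨S, hS1, hS2⟩ :=
      Finset.exists_subset_card_eq (s := Finset.univ.filter (fun i => Q (Ds i))) hcard
    refine ⟨S, ?_, ?_⟩
    · rw [Finset.mem_powersetCard]
      exact ⟨Finset.subset_univ S, hS2⟩
    · intro i hi
      have := hS1 hi
      rw [Finset.mem_filter] at this
      exact this.2
  have h2 := prSets_union (n := n) (N := N) hδ0 hδ1
    ((Finset.univ : Finset (Fin N)).powersetCard h) (fun S Ds => ∀ i ∈ S, Q (Ds i))
  have h3 : ∑ S ∈ (Finset.univ : Finset (Fin N)).powersetCard h,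
      prSets δ n N (fun Ds => ∀ i ∈ S, Q (Ds i))
        = ((N.choose h : ℝ)) * (pr1 δ n Q) ^ h := by
    rw [Finset.sum_congr rfl (fun S hS => by
      rw [prSets_inter_coords (n := n) hδ0 hδ1 S Q, (Finset.mem_powersetCard.1 hS).2])]
    rw [Finset.sum_const, Finset.card_powersetCard, nsmul_eq_mul, Finset.card_univ,
      Fintype.card_fin]
  linarith

lemma prSets_or (hδ0 : 0 ≤ δ) (hδ1 : δ ≤ 1) (P Q : (Fin N → Finset ℕ) → Prop) :
    prSets δ n N (fun Ds => P Ds ∨ Q Ds) ≤ prSets δ n N P + prSets δ n N Q := by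
  unfold prSets
  rw [← Finset.sum_add_distrib]
  apply Finset.sum_le_sum
  intro Ds hDs
  have hw : (0:ℝ) ≤ ∏ i : Fin N, delWeight δ n (Ds i) :=
    Finset.prod_nonneg (fun i _ => delWeight_nonneg n hδ0 hδ1 (Ds i))
  rw [← mul_add]
  apply mul_le_mul_of_nonneg_left _ hw
  by_cases hP : P Ds
  · rw [if_pos (Or.inl hP), if_pos hP]
    have := ite01_nonneg (Q Ds)
    linarith
  · by_cases hQ : Q Ds
    · rw [if_pos (Or.inr hQ), if_pos hQ]
      have := ite01_nonneg (P Ds)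
      linarith
    · rw [if_neg (by tauto), if_neg hP, if_neg hQ]
      norm_num

lemma prSets_congr (P Q : (Fin N → Finset ℕ) → Prop)
    (h : ∀ Ds : Fin N → Finset ℕ, P Ds ↔ Q Ds) :
    prSets δ n N P = prSets δ n N Q := by
  unfold prSets
  apply Finset.sum_congr rfl
  intro Ds hDs
  congr 1
  by_cases hP : P Ds
  · rw [if_pos hP, if_pos ((h Ds).1 hP)]
  · rw [if_neg hP, if_neg (fun hq => hP ((h Ds).2 hq))]

lemma prSets_coord (hδ0 : 0 ≤ δ) (hδ1 : δ ≤ 1) (i : Fin N) (Q : Finset ℕ → Prop) :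
    prSets δ n N (fun Ds => Q (Ds i)) = pr1 δ n Q := by
  rw [prSets_congr (n := n) (fun Ds => Q (Ds i)) (fun Ds => ∀ j ∈ ({i} : Finset (Fin N)), Q (Ds j))
    (fun Ds => by simp)]
  rw [prSets_inter_coords (n := n) hδ0 hδ1 ({i} : Finset (Fin N)) Q]
  simp

/-- Probability that the deletion family is not good. -/
lemma bad_prob (hδ0 : 0 ≤ δ) (hδ1 : δ ≤ 1) (C R L : ℕ) :
    prSets δ n N (fun Ds => ¬ ((∀ i : Fin N, ∀ a ∈ Finset.range n,
        ((Ds i) ∩ Finset.Ico a (a+L)).card ≤ C) ∧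
      (∀ t ∈ Finset.range n, 2 * (Finset.univ.filter
          (fun i => ((Ds i) ∩ Finset.Ico (t+1-(R+1)) (t+1)).Nonempty)).card < N)))
    ≤ (N:ℝ) * n * ((L:ℝ)^(C+1) * δ^(C+1))
      + n * ((N.choose ((N+1)/2)) : ℝ) * (((R:ℝ)+1) * δ)^((N+1)/2) := by
  set h := (N+1)/2 with hh
  have step1 : prSets δ n N (fun Ds => ¬ ((∀ i : Fin N, ∀ a ∈ Finset.range n,
        ((Ds i) ∩ Finset.Ico a (a+L)).card ≤ C) ∧
      (∀ t ∈ Finset.range n, 2 * (Finset.univ.filter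
          (fun i => ((Ds i) ∩ Finset.Ico (t+1-(R+1)) (t+1)).Nonempty)).card < N))) ≤
      prSets δ n N (fun Ds => (∃ p ∈ (Finset.univ : Finset (Fin N)) ×ˢ Finset.range n,
          C + 1 ≤ ((Ds p.1) ∩ Finset.Ico p.2 (p.2+L)).card) ∨
        (∃ t ∈ Finset.range n, h ≤ (Finset.univ.filter
          (fun i => ((Ds i) ∩ Finset.Ico (t+1-(R+1)) (t+1)).Nonempty)).card)) := by
    apply prSets_mono (n := n) hδ0 hδ1
    intro Ds hDs hbad
    by_cases h1 : ∀ i : Fin N, ∀ a ∈ Finset.range n, ((Ds i) ∩ Finset.Ico a (a+L)).card ≤ C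
    · right
      by_cases h2 : ∀ t ∈ Finset.range n, 2 * (Finset.univ.filter
          (fun i => ((Ds i) ∩ Finset.Ico (t+1-(R+1)) (t+1)).Nonempty)).card < N
      · exact absurd ⟨h1, h2⟩ hbad
      · push_neg at h2
        obtain ⟨t, ht1, ht2⟩ := h2
        exact ⟨t, ht1, by omega⟩
    · left
      push_neg at h1
      obtain ⟨i, a, ha, hcard⟩ := h1
      exact ⟨(i, a), Finset.mem_product.2 ⟨Finset.mem_univ i, ha⟩,
        show C + 1 ≤ ((Ds i) ∩ Finset.Ico a (a+L)).card by omega⟩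
  have step2 := prSets_or (n := n) (N := N) hδ0 hδ1
    (fun Ds => ∃ p ∈ (Finset.univ : Finset (Fin N)) ×ˢ Finset.range n,
      C + 1 ≤ ((Ds p.1) ∩ Finset.Ico p.2 (p.2+L)).card)
    (fun Ds => ∃ t ∈ Finset.range n, h ≤ (Finset.univ.filter
      (fun i => ((Ds i) ∩ Finset.Ico (t+1-(R+1)) (t+1)).Nonempty)).card)
  have bound1 : prSets δ n N (fun Ds => ∃ p ∈ (Finset.univ : Finset (Fin N)) ×ˢ Finset.range n,
      C + 1 ≤ ((Ds p.1) ∩ Finset.Ico p.2 (p.2+L)).card)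
      ≤ (N:ℝ) * n * ((L:ℝ)^(C+1) * δ^(C+1)) := by
    have hu := prSets_union (n := n) (N := N) hδ0 hδ1
      ((Finset.univ : Finset (Fin N)) ×ˢ Finset.range n)
      (fun p Ds => C + 1 ≤ ((Ds p.1) ∩ Finset.Ico p.2 (p.2+L)).card)
    have heach : ∀ p ∈ (Finset.univ : Finset (Fin N)) ×ˢ Finset.range n,
        prSets δ n N (fun Ds => C + 1 ≤ ((Ds p.1) ∩ Finset.Ico p.2 (p.2+L)).card)
          ≤ (L:ℝ)^(C+1) * δ^(C+1) := by
      intro p hp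
      rw [prSets_coord (n := n) hδ0 hδ1 p.1 (fun D => C + 1 ≤ (D ∩ Finset.Ico p.2 (p.2+L)).card)]
      have := pr1_card_window (n := n) hδ0 hδ1 (Finset.Ico p.2 (p.2+L)) (C+1)
      rw [Nat.card_Ico] at this
      have heq : p.2 + L - p.2 = L := by omega
      rw [heq] at this
      exact this
    have hsum : ∑ p ∈ (Finset.univ : Finset (Fin N)) ×ˢ Finset.range n,
        prSets δ n N (fun Ds => C + 1 ≤ ((Ds p.1) ∩ Finset.Ico p.2 (p.2+L)).card)
          ≤ ((N:ℝ) * n) * ((L:ℝ)^(C+1) * δ^(C+1)) := by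
      calc _ ≤ ∑ _p ∈ (Finset.univ : Finset (Fin N)) ×ˢ Finset.range n,
            ((L:ℝ)^(C+1) * δ^(C+1)) := Finset.sum_le_sum heach
      _ = ((N:ℝ) * n) * ((L:ℝ)^(C+1) * δ^(C+1)) := by
            rw [Finset.sum_const, Finset.card_product, Finset.card_univ, Fintype.card_fin,
              Finset.card_range, nsmul_eq_mul]
            push_cast
            ring
    calc _ ≤ _ := hu
    _ ≤ ((N:ℝ) * n) * ((L:ℝ)^(C+1) * δ^(C+1)) := hsum
    _ = (N:ℝ) * n * ((L:ℝ)^(C+1) * δ^(C+1)) := by ring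
  have bound2 : prSets δ n N (fun Ds => ∃ t ∈ Finset.range n,
      h ≤ (Finset.univ.filter
        (fun i => ((Ds i) ∩ Finset.Ico (t+1-(R+1)) (t+1)).Nonempty)).card)
      ≤ n * ((N.choose h) : ℝ) * (((R:ℝ)+1) * δ)^h := by
    have hu := prSets_union (n := n) (N := N) hδ0 hδ1 (Finset.range n)
      (fun t Ds => h ≤ (Finset.univ.filter
        (fun i => ((Ds i) ∩ Finset.Ico (t+1-(R+1)) (t+1)).Nonempty)).card)
    have heach : ∀ t ∈ Finset.range n,
        prSets δ n N (fun Ds => h ≤ (Finset.univ.filter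
          (fun i => ((Ds i) ∩ Finset.Ico (t+1-(R+1)) (t+1)).Nonempty)).card)
          ≤ ((N.choose h) : ℝ) * (((R:ℝ)+1) * δ)^h := by
      intro t ht
      have hc := prSets_count (n := n) (N := N) hδ0 hδ1
        (fun D => (D ∩ Finset.Ico (t+1-(R+1)) (t+1)).Nonempty) h
      have hp1 : pr1 δ n (fun D => (D ∩ Finset.Ico (t+1-(R+1)) (t+1)).Nonempty)
          ≤ ((R:ℝ)+1) * δ := by
        have := pr1_nonempty_le (n := n) hδ0 hδ1 (Finset.Ico (t+1-(R+1)) (t+1))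
        have hcard : ((Finset.Ico (t+1-(R+1)) (t+1)).card : ℝ) ≤ (R:ℝ) + 1 := by
          rw [Nat.card_Ico]
          have : (t+1) - (t+1-(R+1)) ≤ R + 1 := by omega
          calc (((t+1) - (t+1-(R+1)) : ℕ) : ℝ) ≤ ((R + 1 : ℕ) : ℝ) := by exact_mod_cast this
          _ = (R:ℝ) + 1 := by push_cast; ring
        calc pr1 δ n (fun D => (D ∩ Finset.Ico (t+1-(R+1)) (t+1)).Nonempty)
            ≤ ((Finset.Ico (t+1-(R+1)) (t+1)).card : ℝ) * δ := this
        _ ≤ ((R:ℝ)+1) * δ := mul_le_mul_of_nonneg_right hcard hδ0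
      have hp0 : 0 ≤ pr1 δ n (fun D => (D ∩ Finset.Ico (t+1-(R+1)) (t+1)).Nonempty) :=
        pr1_nonneg n hδ0 hδ1 _
      calc prSets δ n N (fun Ds => h ≤ (Finset.univ.filter
            (fun i => ((Ds i) ∩ Finset.Ico (t+1-(R+1)) (t+1)).Nonempty)).card)
          ≤ ((N.choose h) : ℝ) * (pr1 δ n
              (fun D => (D ∩ Finset.Ico (t+1-(R+1)) (t+1)).Nonempty))^h := hc
      _ ≤ ((N.choose h) : ℝ) * (((R:ℝ)+1) * δ)^h := by
            apply mul_le_mul_of_nonneg_left _ (by positivity)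
            exact pow_le_pow_left₀ hp0 hp1 h
    have hsum : ∑ t ∈ Finset.range n, prSets δ n N (fun Ds => h ≤ (Finset.univ.filter
          (fun i => ((Ds i) ∩ Finset.Ico (t+1-(R+1)) (t+1)).Nonempty)).card)
        ≤ n * ((N.choose h) : ℝ) * (((R:ℝ)+1) * δ)^h := by
      calc _ ≤ ∑ _t ∈ Finset.range n, ((N.choose h) : ℝ) * (((R:ℝ)+1) * δ)^h :=
            Finset.sum_le_sum heach
      _ = n * ((N.choose h) : ℝ) * (((R:ℝ)+1) * δ)^h := by
            rw [Finset.sum_const, Finset.card_range, nsmul_eq_mul]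
            ring
    calc _ ≤ _ := hu
    _ ≤ _ := hsum
  calc prSets δ n N _ ≤ _ := step1
  _ ≤ _ := step2
  _ ≤ (N:ℝ) * n * ((L:ℝ)^(C+1) * δ^(C+1))
      + n * ((N.choose h) : ℝ) * (((R:ℝ)+1) * δ)^h := add_le_add bound1 bound2

end Prob

section Asymp

open Filter

/-- `R` as used in the main proof. -/
noncomputable def Rp (ε : ℝ) (n : ℕ) : ℕ := (2*Cp ε+2)*((2*mp n+1)+1)

/-- `L` as used in the main proof. -/
noncomputable def Lp (ε : ℝ) (n : ℕ) : ℕ := Rp ε n + 2*Cp ε + 3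

lemma numeric_final (n : ℕ) (hn : 2 ≤ n) (N C R L h : ℕ) (δ : ℝ) (hδ0 : 0 ≤ δ)
    (ε : ℝ) (hε : 0 < ε)
    (hRL : R + 1 ≤ L) (hNn : N ≤ n)
    (ha : (L:ℝ) * δ ≤ (n:ℝ) ^ (-(ε/2)))
    (hb : (N:ℝ) * ((L:ℝ) * δ) ≤ (n:ℝ) ^ (-(ε/4)))
    (hcc : 50 ≤ (ε/2) * ((C:ℝ)+1))
    (hd : 16 ≤ ε * (h:ℝ)) :
    (N:ℝ) * n * ((L:ℝ)^(C+1) * δ^(C+1)) + (n:ℝ) * ((N.choose h) : ℝ) * (((R:ℝ)+1) * δ)^h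
      ≤ 1 / (n:ℝ)^2 := by
  have hnr1 : (1:ℝ) ≤ (n:ℝ) := by
    have : (1:ℕ) ≤ n := by omega
    exact_mod_cast this
  have hnr0 : (0:ℝ) < (n:ℝ) := by linarith
  have hLδ0 : 0 ≤ (L:ℝ) * δ := mul_nonneg (by positivity) hδ0
  -- term 1
  have t1a : (L:ℝ)^(C+1) * δ^(C+1) = ((L:ℝ) * δ)^(C+1) := (mul_pow _ _ _).symm
  have t1b : ((L:ℝ) * δ)^(C+1) ≤ ((n:ℝ) ^ (-(ε/2)))^(C+1) := pow_le_pow_left₀ hLδ0 ha _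
  have t1c : ((n:ℝ) ^ (-(ε/2)))^(C+1) = (n:ℝ) ^ ((-(ε/2)) * ((C:ℝ)+1)) := by
    rw [← Real.rpow_natCast ((n:ℝ) ^ (-(ε/2))) (C+1), ← Real.rpow_mul (le_of_lt hnr0)]
    push_cast
    ring_nf
  have t1d : (n:ℝ) ^ ((-(ε/2)) * ((C:ℝ)+1)) ≤ (n:ℝ) ^ (-(50:ℝ)) := by
    apply Real.rpow_le_rpow_of_exponent_le hnr1
    nlinarith
  have t1 : (N:ℝ) * n * ((L:ℝ)^(C+1) * δ^(C+1)) ≤ (n:ℝ) ^ (-(48:ℝ)) := by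
    have hN' : (N:ℝ) ≤ (n:ℝ) := by exact_mod_cast hNn
    have h1 : (N:ℝ) * n * ((L:ℝ)^(C+1) * δ^(C+1)) ≤ (n:ℝ) * (n:ℝ) * (n:ℝ) ^ (-(50:ℝ)) := by
      apply mul_le_mul
      · apply mul_le_mul hN' (le_refl _) (le_of_lt hnr0) (by linarith)
      · rw [t1a]
        calc ((L:ℝ) * δ)^(C+1) ≤ ((n:ℝ) ^ (-(ε/2)))^(C+1) := t1b
        _ = (n:ℝ) ^ ((-(ε/2)) * ((C:ℝ)+1)) := t1c
        _ ≤ (n:ℝ) ^ (-(50:ℝ)) := t1d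
      · rw [t1a]
        positivity
      · positivity
    have h2 : (n:ℝ) * (n:ℝ) * (n:ℝ) ^ (-(50:ℝ)) = (n:ℝ) ^ (-(48:ℝ)) := by
      rw [show ((n:ℝ) * (n:ℝ)) = (n:ℝ) ^ ((2:ℕ):ℝ) by rw [Real.rpow_natCast]; ring]
      rw [← Real.rpow_add hnr0]
      norm_num
    linarith [h1, h2.le, h2.ge]
  -- term 2
  have t2 : (n:ℝ) * ((N.choose h) : ℝ) * (((R:ℝ)+1) * δ)^h ≤ (n:ℝ) ^ (-(3:ℝ)) := by
    have hch : ((N.choose h) : ℝ) ≤ ((N:ℝ))^h := by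
      calc ((N.choose h) : ℝ) ≤ (((N^h : ℕ)) : ℝ) := by exact_mod_cast Nat.choose_le_pow N h
      _ = ((N:ℝ))^h := by push_cast; ring
    have hRδ : 0 ≤ ((R:ℝ)+1) * δ := mul_nonneg (by positivity) hδ0
    have hRL' : ((R:ℝ)+1) * δ ≤ (L:ℝ) * δ := by
      apply mul_le_mul_of_nonneg_right _ hδ0
      have : ((R:ℝ)+1) ≤ (L:ℝ) := by
        have : ((R+1 : ℕ):ℝ) ≤ ((L:ℕ):ℝ) := by exact_mod_cast hRL
        push_cast at this
        linarith
      linarith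
    have key : ((N:ℝ))^h * (((R:ℝ)+1) * δ)^h ≤ ((n:ℝ) ^ (-(ε/4)))^h := by
      rw [← mul_pow]
      apply pow_le_pow_left₀ (by positivity)
      calc (N:ℝ) * (((R:ℝ)+1) * δ) ≤ (N:ℝ) * ((L:ℝ) * δ) :=
            mul_le_mul_of_nonneg_left hRL' (by positivity)
      _ ≤ (n:ℝ) ^ (-(ε/4)) := hb
    have hh4 : ((n:ℝ) ^ (-(ε/4)))^h = (n:ℝ) ^ ((-(ε/4)) * (h:ℝ)) := by
      rw [← Real.rpow_natCast ((n:ℝ) ^ (-(ε/4))) h, ← Real.rpow_mul (le_of_lt hnr0)]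
    have hh5 : (n:ℝ) ^ ((-(ε/4)) * (h:ℝ)) ≤ (n:ℝ) ^ (-(4:ℝ)) := by
      apply Real.rpow_le_rpow_of_exponent_le hnr1
      nlinarith
    calc (n:ℝ) * ((N.choose h) : ℝ) * (((R:ℝ)+1) * δ)^h
        ≤ (n:ℝ) * (((N:ℝ))^h * (((R:ℝ)+1) * δ)^h) := by
          rw [mul_assoc]
          apply mul_le_mul_of_nonneg_left _ (le_of_lt hnr0)
          apply mul_le_mul_of_nonneg_right hch (by positivity)
    _ ≤ (n:ℝ) * ((n:ℝ) ^ (-(ε/4)))^h := mul_le_mul_of_nonneg_left key (le_of_lt hnr0)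
    _ ≤ (n:ℝ) * (n:ℝ) ^ (-(4:ℝ)) := by
          apply mul_le_mul_of_nonneg_left _ (le_of_lt hnr0)
          rw [hh4]
          exact hh5
    _ = (n:ℝ) ^ (-(3:ℝ)) := by
          rw [show (n:ℝ) * (n:ℝ) ^ (-(4:ℝ)) = (n:ℝ)^((1:ℝ)) * (n:ℝ) ^ (-(4:ℝ)) by
            rw [Real.rpow_one]]
          rw [← Real.rpow_add hnr0]
          norm_num
  -- combine
  have hcomb : (n:ℝ) ^ (-(48:ℝ)) + (n:ℝ) ^ (-(3:ℝ)) ≤ 1 / (n:ℝ)^2 := by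
    have h1 : (n:ℝ) ^ (-(48:ℝ)) ≤ (n:ℝ) ^ (-(3:ℝ)) :=
      Real.rpow_le_rpow_of_exponent_le hnr1 (by norm_num)
    have h2 : (2:ℝ) * (n:ℝ) ^ (-(3:ℝ)) ≤ 1 / (n:ℝ)^2 := by
      have hnr2 : (2:ℝ) ≤ (n:ℝ) := by exact_mod_cast hn
      have e1 : (n:ℝ) ^ (-(3:ℝ)) = 1 / (n:ℝ)^3 := by
        rw [Real.rpow_neg (le_of_lt hnr0), show ((3:ℝ)) = ((3:ℕ):ℝ) by norm_num,
          Real.rpow_natCast]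
        rw [inv_eq_one_div]
      rw [e1]
      rw [show (2:ℝ) * (1 / (n:ℝ)^3) = 2 / (n:ℝ)^3 by ring]
      rw [div_le_div_iff₀ (by positivity) (by positivity)]
      nlinarith [pow_pos hnr0 2, pow_pos hnr0 3]
    linarith
  linarith

end Asymp

section Asymp2

open Filter

lemma delta_nonneg (ε : ℝ) (n : ℕ) : 0 ≤ delta ε n := Real.rpow_nonneg (Nat.cast_nonneg n) _

lemma delta_le_one (ε : ℝ) (hε : 0 < ε) (n : ℕ) (hn : 1 ≤ n) : delta ε n ≤ 1 := by
  apply Real.rpow_le_one_of_one_le_of_nonpos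
  · exact_mod_cast hn
  · linarith [hε]

lemma one_le_u (n : ℕ) (hn : 1 ≤ n) : (1:ℝ) ≤ (n:ℝ)^((1:ℝ)/3) := by
  have h1 : (1:ℝ) ≤ (n:ℝ) := by exact_mod_cast hn
  calc (1:ℝ) = (1:ℝ)^((1:ℝ)/3) := (Real.one_rpow _).symm
  _ ≤ (n:ℝ)^((1:ℝ)/3) := Real.rpow_le_rpow (by norm_num) h1 (by norm_num)

lemma Lp_le (ε : ℝ) (n : ℕ) (hn : 1 ≤ n) :
    (Lp ε n : ℝ) ≤ (15*((Cp ε : ℝ)+1)) * (n:ℝ)^((1:ℝ)/3) := by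
  set u := (n:ℝ)^((1:ℝ)/3) with hu
  have hu1 : (1:ℝ) ≤ u := one_le_u n hn
  have hm : (mp n : ℝ) ≤ u + 1 := by
    have := Nat.ceil_lt_add_one (R := ℝ) (a := (n:ℝ)^((1:ℝ)/3))
      (Real.rpow_nonneg (Nat.cast_nonneg n) _)
    unfold mp
    rw [← hu] at this ⊢
    linarith
  have hc0 : (0:ℝ) ≤ (Cp ε : ℝ) := Nat.cast_nonneg _
  have hLcast : (Lp ε n : ℝ)
      = (2*(Cp ε:ℝ)+2)*((2*(mp n:ℝ)+1)+1) + 2*(Cp ε:ℝ) + 3 := by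
    unfold Lp Rp
    push_cast
    ring
  rw [hLcast]
  nlinarith [mul_nonneg hc0 (by linarith : (0:ℝ) ≤ u - 1), hu1, hm, hc0,
    mul_le_mul_of_nonneg_left hm (by linarith : (0:ℝ) ≤ 2*(Cp ε:ℝ)+2)]

lemma Ldelta_le (ε : ℝ) (n : ℕ) (hn : 1 ≤ n) :
    (Lp ε n : ℝ) * delta ε n ≤ (15*((Cp ε : ℝ)+1)) * (n:ℝ)^(-ε) := by
  have hδ0 := delta_nonneg ε n
  have hL := Lp_le ε n hn
  have hnr0 : (0:ℝ) < (n:ℝ) := by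
    have : (1:ℕ) ≤ n := hn
    have h1 : (1:ℝ) ≤ (n:ℝ) := by exact_mod_cast this
    linarith
  have hud : (n:ℝ)^((1:ℝ)/3) * delta ε n = (n:ℝ)^(-ε) := by
    unfold delta
    rw [← Real.rpow_add hnr0]
    norm_num
  calc (Lp ε n : ℝ) * delta ε n ≤ ((15*((Cp ε : ℝ)+1)) * (n:ℝ)^((1:ℝ)/3)) * delta ε n :=
        mul_le_mul_of_nonneg_right hL hδ0
  _ = (15*((Cp ε : ℝ)+1)) * ((n:ℝ)^((1:ℝ)/3) * delta ε n) := by ring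
  _ = (15*((Cp ε : ℝ)+1)) * (n:ℝ)^(-ε) := by rw [hud]

lemma eventual_facts (ε : ℝ) (hε : 0 < ε) :
    ∀ᶠ n : ℕ in Filter.atTop,
      (3 ≤ n) ∧
      (Cp ε ≤ 2 * mp n + 1) ∧
      (⌈(64/ε) * Real.log n⌉₊ ≤ n) ∧
      ((Lp ε n : ℝ) * delta ε n ≤ (n:ℝ) ^ (-(ε/2))) ∧
      ((⌈(64/ε) * Real.log n⌉₊ : ℝ) * ((Lp ε n : ℝ) * delta ε n) ≤ (n:ℝ) ^ (-(ε/4))) := by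
  set K := (15*((Cp ε : ℝ)+1)) with hK
  have hK0 : 0 < K := by
    have : (0:ℝ) ≤ (Cp ε : ℝ) := Nat.cast_nonneg _
    rw [hK]; linarith
  set c := (64:ℝ)/ε with hc
  have hc0 : 0 < c := by positivity
  have hcast : Filter.Tendsto (fun n : ℕ => (n:ℝ)) Filter.atTop Filter.atTop :=
    tendsto_natCast_atTop_atTop
  -- eventually log x ≤ x ^ (3ε/8) and log x ≤ x ^ (1/2)
  have hlog1 : ∀ᶠ x : ℝ in Filter.atTop, Real.log x ≤ x ^ (3*ε/8) := by
    have h := (isLittleO_log_rpow_atTop (by positivity : (0:ℝ) < 3*ε/8)).bound one_pos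
    filter_upwards [h, Filter.eventually_ge_atTop (1:ℝ)] with x hx hx1
    have h2 : Real.log x ≤ ‖Real.log x‖ := le_abs_self _
    have h3 : ‖x ^ (3*ε/8)‖ = x ^ (3*ε/8) := by
      rw [Real.norm_eq_abs, abs_of_nonneg (Real.rpow_nonneg (by linarith) _)]
    calc Real.log x ≤ ‖Real.log x‖ := h2
    _ ≤ 1 * ‖x ^ (3*ε/8)‖ := hx
    _ = x ^ (3*ε/8) := by rw [one_mul, h3]
  have hlog2 : ∀ᶠ x : ℝ in Filter.atTop, Real.log x ≤ x ^ ((1:ℝ)/2) := by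
    have h := (isLittleO_log_rpow_atTop (by norm_num : (0:ℝ) < 1/2)).bound one_pos
    filter_upwards [h, Filter.eventually_ge_atTop (1:ℝ)] with x hx hx1
    have h3 : ‖x ^ ((1:ℝ)/2)‖ = x ^ ((1:ℝ)/2) := by
      rw [Real.norm_eq_abs, abs_of_nonneg (Real.rpow_nonneg (by linarith) _)]
    calc Real.log x ≤ ‖Real.log x‖ := le_abs_self _
    _ ≤ 1 * ‖x ^ ((1:ℝ)/2)‖ := hx
    _ = x ^ ((1:ℝ)/2) := by rw [one_mul, h3]
  -- eventually constants below growing rpow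
  have grow : ∀ r : ℝ, 0 < r → ∀ Kc : ℝ, ∀ᶠ x : ℝ in Filter.atTop, Kc ≤ x ^ r := by
    intro r hr Kc
    exact (tendsto_rpow_atTop hr).eventually_ge_atTop Kc
  have ev1 : ∀ᶠ n : ℕ in Filter.atTop, 3 ≤ n := Filter.eventually_ge_atTop 3
  have ev2 : ∀ᶠ n : ℕ in Filter.atTop, Cp ε ≤ 2 * mp n + 1 := by
    have h := hcast.eventually (grow ((1:ℝ)/3) (by norm_num) ((Cp ε : ℝ)))
    filter_upwards [h] with n hn
    have h2 : ((Cp ε : ℕ):ℝ) ≤ ((mp n : ℕ):ℝ) := by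
      calc ((Cp ε : ℕ):ℝ) ≤ (n:ℝ) ^ ((1:ℝ)/3) := hn
      _ ≤ (mp n : ℝ) := Nat.le_ceil _
    have h3 : Cp ε ≤ mp n := by exact_mod_cast h2
    omega
  have ev3 : ∀ᶠ n : ℕ in Filter.atTop, ⌈c * Real.log n⌉₊ ≤ n := by
    have h := hcast.eventually (hlog2.and ((grow ((1:ℝ)/2) (by norm_num) (c+1)).and
      (Filter.eventually_ge_atTop (1:ℝ))))
    filter_upwards [h] with n hn
    obtain ⟨ha, hb, hc1⟩ := hn
    have hx1 : (1:ℝ) ≤ (n:ℝ) := hc1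
    have hr0 : (0:ℝ) ≤ (n:ℝ) ^ ((1:ℝ)/2) := Real.rpow_nonneg (by linarith) _
    have hr1 : (1:ℝ) ≤ (n:ℝ) ^ ((1:ℝ)/2) := by
      calc (1:ℝ) = (1:ℝ)^((1:ℝ)/2) := (Real.one_rpow _).symm
      _ ≤ (n:ℝ)^((1:ℝ)/2) := Real.rpow_le_rpow (by norm_num) hx1 (by norm_num)
    have hlogn0 : 0 ≤ Real.log (n:ℝ) := Real.log_nonneg hx1
    have h1 : c * Real.log (n:ℝ) + 1 ≤ (n:ℝ) := by
      have step : c * Real.log (n:ℝ) + 1 ≤ (c+1) * (n:ℝ)^((1:ℝ)/2) := by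
        nlinarith [mul_le_mul_of_nonneg_left ha (le_of_lt hc0)]
      have step2 : (c+1) * (n:ℝ)^((1:ℝ)/2) ≤ (n:ℝ)^((1:ℝ)/2) * (n:ℝ)^((1:ℝ)/2) := by
        nlinarith
      have step3 : (n:ℝ)^((1:ℝ)/2) * (n:ℝ)^((1:ℝ)/2) = (n:ℝ) := by
        rw [← Real.rpow_add (by linarith)]
        norm_num
      linarith
    have h2 : (⌈c * Real.log (n:ℝ)⌉₊ : ℝ) ≤ (n:ℝ) := by
      have := Nat.ceil_lt_add_one (R := ℝ) (by positivity : 0 ≤ c * Real.log (n:ℝ))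
      linarith
    exact_mod_cast h2
  have ev4 : ∀ᶠ n : ℕ in Filter.atTop,
      (Lp ε n : ℝ) * delta ε n ≤ (n:ℝ) ^ (-(ε/2)) := by
    have h := hcast.eventually ((grow (ε/2) (by positivity) K).and
      (Filter.eventually_ge_atTop (1:ℝ)))
    filter_upwards [h, Filter.eventually_ge_atTop 1] with n hn hn1
    obtain ⟨ha, hb⟩ := hn
    have h1 := Ldelta_le ε n hn1
    have hnr0 : (0:ℝ) < (n:ℝ) := by linarith
    have h2 : K * (n:ℝ)^(-ε) ≤ (n:ℝ)^(ε/2) * (n:ℝ)^(-ε) := by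
      apply mul_le_mul_of_nonneg_right ha (Real.rpow_nonneg (by linarith) _)
    have h3 : (n:ℝ)^(ε/2) * (n:ℝ)^(-ε) = (n:ℝ)^(-(ε/2)) := by
      rw [← Real.rpow_add hnr0]
      ring_nf
    rw [← hK] at h1
    linarith
  have ev5 : ∀ᶠ n : ℕ in Filter.atTop,
      ((⌈c * Real.log n⌉₊ : ℕ) : ℝ) * ((Lp ε n : ℝ) * delta ε n) ≤ (n:ℝ) ^ (-(ε/4)) := by
    have h := hcast.eventually (hlog1.and ((grow (3*ε/8) (by positivity) ((c+1)*K)).and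
      (Filter.eventually_ge_atTop (1:ℝ))))
    filter_upwards [h, Filter.eventually_ge_atTop 1] with n hn hn1
    obtain ⟨ha, hb, hc1⟩ := hn
    have hnr0 : (0:ℝ) < (n:ℝ) := by linarith
    have hx1 : (1:ℝ) ≤ (n:ℝ) := hc1
    have hlogn0 : 0 ≤ Real.log (n:ℝ) := Real.log_nonneg hx1
    have hr0 : (0:ℝ) ≤ (n:ℝ) ^ (3*ε/8) := Real.rpow_nonneg (by linarith) _
    have hr1 : (1:ℝ) ≤ (n:ℝ) ^ (3*ε/8) := by
      calc (1:ℝ) = (1:ℝ)^(3*ε/8) := (Real.one_rpow _).symm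
      _ ≤ (n:ℝ)^(3*ε/8) := Real.rpow_le_rpow (by norm_num) hx1 (by positivity)
    have hN : ((⌈c * Real.log n⌉₊ : ℕ) : ℝ) ≤ c * Real.log (n:ℝ) + 1 := by
      have := Nat.ceil_lt_add_one (R := ℝ) (by positivity : 0 ≤ c * Real.log (n:ℝ))
      linarith
    have hLδ := Ldelta_le ε n hn1
    rw [← hK] at hLδ
    have hLδ0 : 0 ≤ (Lp ε n : ℝ) * delta ε n :=
      mul_nonneg (Nat.cast_nonneg _) (delta_nonneg ε n)
    have hN0 : (0:ℝ) ≤ ((⌈c * Real.log n⌉₊ : ℕ) : ℝ) := Nat.cast_nonneg _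
    have step1 : ((⌈c * Real.log n⌉₊ : ℕ) : ℝ) * ((Lp ε n : ℝ) * delta ε n)
        ≤ (c * Real.log (n:ℝ) + 1) * (K * (n:ℝ)^(-ε)) := by
      apply mul_le_mul hN hLδ hLδ0 (by positivity)
    have step2 : (c * Real.log (n:ℝ) + 1) * K ≤ (n:ℝ)^(3*ε/8) * (n:ℝ)^(3*ε/8) := by
      have s1 : c * Real.log (n:ℝ) + 1 ≤ (c+1) * (n:ℝ)^(3*ε/8) := by
        nlinarith [mul_le_mul_of_nonneg_left ha (le_of_lt hc0)]
      calc (c * Real.log (n:ℝ) + 1) * K ≤ ((c+1) * (n:ℝ)^(3*ε/8)) * K := by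
            apply mul_le_mul_of_nonneg_right s1 (le_of_lt hK0)
      _ = ((c+1)*K) * (n:ℝ)^(3*ε/8) := by ring
      _ ≤ (n:ℝ)^(3*ε/8) * (n:ℝ)^(3*ε/8) := by
            apply mul_le_mul_of_nonneg_right hb hr0
    have step3 : (n:ℝ)^(3*ε/8) * (n:ℝ)^(3*ε/8) = (n:ℝ)^(3*ε/4) := by
      rw [← Real.rpow_add hnr0]
      ring_nf
    have step4 : (n:ℝ)^(3*ε/4) * (n:ℝ)^(-ε) = (n:ℝ)^(-(ε/4)) := by
      rw [← Real.rpow_add hnr0]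
      ring_nf
    have hrε0 : (0:ℝ) ≤ (n:ℝ)^(-ε) := Real.rpow_nonneg (by linarith) _
    calc ((⌈c * Real.log n⌉₊ : ℕ) : ℝ) * ((Lp ε n : ℝ) * delta ε n)
        ≤ (c * Real.log (n:ℝ) + 1) * (K * (n:ℝ)^(-ε)) := step1
    _ = ((c * Real.log (n:ℝ) + 1) * K) * (n:ℝ)^(-ε) := by ring
    _ ≤ ((n:ℝ)^(3*ε/8) * (n:ℝ)^(3*ε/8)) * (n:ℝ)^(-ε) := by
          apply mul_le_mul_of_nonneg_right step2 hrε0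
    _ = (n:ℝ)^(3*ε/4) * (n:ℝ)^(-ε) := by rw [step3]
    _ = (n:ℝ)^(-(ε/4)) := step4
  filter_upwards [ev1, ev2, ev3, ev4, ev5] with n h1 h2 h3 h4 h5
  exact ⟨h1, h2, h3, h4, h5⟩

end Asymp2

section Final

lemma inter_Ico_empty (Dd : Finset ℕ) (n a L : ℕ) (hsub : Dd ⊆ Finset.range n)
    (ha : n ≤ a) : (Dd ∩ Finset.Ico a (a + L)).card = 0 := by
  rw [Finset.card_eq_zero, Finset.eq_empty_iff_forall_notMem]
  intro q hq
  rw [Finset.mem_inter, Finset.mem_Ico] at hq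
  have := hsub hq.1
  rw [Finset.mem_range] at this
  omega

theorem statement1' (ε : ℝ) (hε : 0 < ε) :
    ∃ (c : ℝ) (n0 : ℕ), ∀ n : ℕ, n0 ≤ n →
      ∀ N : ℕ, N = ⌈c * Real.log n⌉₊ →
        ∀ x ∈ binStrings n,
          (¬ hasDesert (Cp ε) (Mp n) x →
            1 - 1 / (n : ℝ) ^ 2 ≤
              prTraces (delta ε n) x N (fun zs => BMA n N zs = x)) ∧
          (∀ r : ℕ, firstDeep (Cp ε) (mp n) x r →
            1 - 1 / (n : ℝ) ^ 2 ≤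
              prTraces (delta ε n) x N (fun zs =>
                subword (BMA n N zs) 0 (r + mp n) = subword x 0 (r + mp n))) := by
  obtain ⟨n0, hn0⟩ := Filter.eventually_atTop.1 (eventual_facts ε hε)
  refine ⟨64/ε, n0, ?_⟩
  intro n hn N hNdef x hx
  obtain ⟨h3n, hCm, hNn, hLδ, hNLδ⟩ := hn0 n hn
  subst hNdef
  set N := ⌈(64/ε) * Real.log n⌉₊ with hNdef
  -- basic parameters
  set C := Cp ε with hCdef
  set m := mp n with hmdef
  set R := Rp ε n with hRdef
  set L := Lp ε n with hLdef
  have hC1 : 1 ≤ C := by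
    rw [hCdef]
    unfold Cp
    have : (0:ℝ) < 100/ε := by positivity
    exact Nat.ceil_pos.2 this
  have hxlen : x.length = n := by
    unfold binStrings at hx
    rw [Finset.mem_image] at hx
    obtain ⟨f, _, rfl⟩ := hx
    simp
  have hn1 : 1 ≤ n := by omega
  have hδ0 : 0 ≤ delta ε n := delta_nonneg ε n
  have hδ1 : delta ε n ≤ 1 := delta_le_one ε hε n hn1
  have hRL : R + 1 ≤ L := by
    rw [hLdef]
    unfold Lp
    omega
  have hReq : R = (2*C+2)*((2*m+1)+1) := by
    rw [hRdef, hCdef, hmdef]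
    rfl
  have hLeq : L = R + 2*C + 3 := by
    rw [hLdef, hRdef, hCdef]
    rfl
  -- the good event
  set Good : (Fin N → Finset ℕ) → Prop := fun Ds =>
    (∀ i : Fin N, ∀ a ∈ Finset.range n, ((Ds i) ∩ Finset.Ico a (a+L)).card ≤ C) ∧
    (∀ t ∈ Finset.range n, 2 * (Finset.univ.filter
        (fun i => ((Ds i) ∩ Finset.Ico (t+1-(R+1)) (t+1)).Nonempty)).card < N) with hGood
  -- probability of failure
  have hd16 : (16:ℝ) ≤ ε * (((N+1)/2 : ℕ) : ℝ) := by
    have hlog1 : (1:ℝ) ≤ Real.log n := by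
      rw [Real.le_log_iff_exp_le (by positivity)]
      calc Real.exp 1 ≤ 2.7182818286 := (Real.exp_one_lt_d9).le
      _ ≤ 3 := by norm_num
      _ ≤ (n:ℝ) := by exact_mod_cast h3n
    have hNge : (64/ε) * Real.log n ≤ (N:ℝ) := Nat.le_ceil _
    have hNval : (32:ℝ)/ε ≤ (N:ℝ)/2 := by
      have h1 : (64/ε) * Real.log n ≥ 64/ε := by
        nlinarith [hlog1, (by positivity : (0:ℝ) < 64/ε)]
      have h64 : (64:ℝ)/ε = 2*(32/ε) := by ring
      linarith
    have hhalf : (N:ℝ)/2 ≤ (((N+1)/2 : ℕ) : ℝ) := by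
      have h1 : N ≤ 2 * ((N+1)/2) := by omega
      have h2 : (N:ℝ) ≤ 2 * (((N+1)/2 : ℕ) : ℝ) := by exact_mod_cast h1
      linarith
    have : (32:ℝ)/ε ≤ (((N+1)/2 : ℕ) : ℝ) := le_trans hNval hhalf
    calc (16:ℝ) ≤ ε * ((32:ℝ)/ε) := by
          rw [mul_div_assoc']
          rw [mul_comm]
          rw [mul_div_assoc]
          rw [div_self (ne_of_gt hε)]
          norm_num
    _ ≤ ε * (((N+1)/2 : ℕ) : ℝ) := by
          apply mul_le_mul_of_nonneg_left this (le_of_lt hε)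
  have hcc : (50:ℝ) ≤ (ε/2) * ((C:ℝ)+1) := by
    have h1 : (100:ℝ)/ε ≤ (C:ℝ) := by
      rw [hCdef]
      unfold Cp
      exact Nat.le_ceil _
    have h2 : (ε/2) * ((100:ℝ)/ε) = 50 := by
      field_simp
      ring
    nlinarith [hε]
  have hprob : prSets (delta ε n) n N (fun Ds => ¬ Good Ds) ≤ 1/(n:ℝ)^2 := by
    calc prSets (delta ε n) n N (fun Ds => ¬ Good Ds)
        ≤ (N:ℝ) * n * ((L:ℝ)^(C+1) * (delta ε n)^(C+1))
          + n * ((N.choose ((N+1)/2)) : ℝ) * (((R:ℝ)+1) * (delta ε n))^((N+1)/2) :=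
          bad_prob (n := n) (N := N) hδ0 hδ1 C R L
    _ ≤ 1/(n:ℝ)^2 :=
          numeric_final n (by omega) N C R L ((N+1)/2) (delta ε n) hδ0 ε hε hRL hNn
            hLδ hNLδ hcc hd16
  have hgood_ge : 1 - 1/(n:ℝ)^2 ≤ prSets (delta ε n) n N Good := by
    have := prSets_compl (n := n) (N := N) hδ0 hδ1 Good
    linarith
  constructor
  · -- no desert case
    intro hnd
    have himp : ∀ Ds : Fin N → Finset ℕ, (∀ i, Ds i ⊆ Finset.range n) → Good Ds →
        BMA n N (fun i => trace x (Ds i)) = x := by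
      intro Ds hsub hG
      apply BMA_all x Ds n hxlen
      apply det_main x Ds (C := C) (M := 2*m+1) (R := R) (L := L) (B := n)
        hC1 (by omega) hReq hLeq
      · intro i a
        rcases Nat.lt_or_ge a n with h | h
        · exact hG.1 i a (Finset.mem_range.2 h)
        · rw [inter_Ico_empty (Ds i) n a L (hsub i) h]
          omega
      · intro t ht
        exact hG.2 t (Finset.mem_range.2 ht)
      · have := HMP_of_noDesert x hC1 hCm (by rw [hmdef] at hCm ⊢; exact hnd)
        rw [hxlen] at this
        exact this
    have hmono : prSets (delta ε n) n N Good ≤ prSets (delta ε n) n N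
        (fun Ds => BMA n N (fun i => trace x (Ds i)) = x) := by
      apply prSets_mono (n := n) hδ0 hδ1
      exact fun Ds hsub hG => himp Ds hsub hG
    have hfinal : prTraces (delta ε n) x N (fun zs => BMA n N zs = x)
        = prSets (delta ε n) n N (fun Ds => BMA n N (fun i => trace x (Ds i)) = x) := by
      unfold prTraces
      rw [hxlen]
    rw [hfinal]
    linarith
  · -- first deep desert case
    intro r hfd
    have hrm : m ≤ r := by
      rw [hmdef]
      exact hfd.1.1
    have hlen2 : r + m + 1 ≤ n := by
      obtain ⟨s, hs1, hs2, hs3, hs4⟩ := hfd.1.2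
      rw [subword_length] at hs3
      rw [hxlen] at hs3
      have h5 := (le_inf_iff.1 hs3).2
      omega
    have himp : ∀ Ds : Fin N → Finset ℕ, (∀ i, Ds i ⊆ Finset.range n) → Good Ds →
        subword (BMA n N (fun i => trace x (Ds i))) 0 (r + m) = subword x 0 (r + m) := by
      intro Ds hsub hG
      apply BMA_prefix x Ds n (r + m) hxlen (by omega)
      apply det_main x Ds (C := C) (M := 2*m+1) (R := R) (L := L) (B := r + m + 1)
        hC1 (by omega) hReq hLeq
      · intro i a
        rcases Nat.lt_or_ge a n with h | h
        · exact hG.1 i a (Finset.mem_range.2 h)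
        · rw [inter_Ico_empty (Ds i) n a L (hsub i) h]
          omega
      · intro t ht
        exact hG.2 t (Finset.mem_range.2 (by omega))
      · exact HMP_of_firstDeep x hC1 hCm hfd
    have hmono : prSets (delta ε n) n N Good ≤ prSets (delta ε n) n N
        (fun Ds => subword (BMA n N (fun i => trace x (Ds i))) 0 (r + m)
          = subword x 0 (r + m)) := by
      apply prSets_mono (n := n) hδ0 hδ1
      exact fun Ds hsub hG => himp Ds hsub hG
    have hfinal : prTraces (delta ε n) x N (fun zs =>
        subword (BMA n N zs) 0 (r + mp n) = subword x 0 (r + mp n))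
        = prSets (delta ε n) n N (fun Ds =>
          subword (BMA n N (fun i => trace x (Ds i))) 0 (r + m) = subword x 0 (r + m)) := by
      unfold prTraces
      rw [hxlen, hmdef]
    rw [hfinal]
    linarith

end Final

/-- Theorem 2: performance guarantee of BMA on `N = O(log n)` fresh
traces at deletion rate `δ = n^{-(1/3+ε)}`. -/
theorem statement1 (ε : ℝ) (hε : 0 < ε) :
    ∃ (c : ℝ) (n0 : ℕ), ∀ n : ℕ, n0 ≤ n →
      ∀ N : ℕ, N = ⌈c * Real.log n⌉₊ →
        ∀ x ∈ binStrings n,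
          (¬ hasDesert (Cp ε) (Mp n) x →
            1 - 1 / (n : ℝ) ^ 2 ≤
              prTraces (delta ε n) x N (fun zs => BMA n N zs = x)) ∧
          (∀ r : ℕ, firstDeep (Cp ε) (mp n) x r →
            1 - 1 / (n : ℝ) ^ 2 ≤
              prTraces (delta ε n) x N (fun zs =>
                subword (BMA n N zs) 0 (r + mp n) = subword x 0 (r + mp n))) :=
  statement1' ε hε

end TraceRec
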